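/- arXiv:1702.08168 — 8 statements merged into one kernel-verified Lean document; each statement's English description precedes it below -/
import Mathlib

section
/- Assume in addition that α,β ∈ ℤ with α < 0 < β. Then for every v ∈ V one has Σ_{e∈E₁, v−β/2 < e ≤ v+β/2} 𝓛₁(e) = Σ_{e∈E₂, v+α/2 < e ≤ v−α/2} 𝓛₂(e). -/
open Complex

noncomputable section
open scoped Classical

/-- The face lattice `F = ℤα + ℤβ ⊆ ℝ`. -/
def latF (α β : ℝ) : Set ℝ := {u | ∃ x y : ℤ, u = x * α + y * β}

/-- The vertex lattice `V = F + (α+β)/2`. -/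
def latV (α β : ℝ) : Set ℝ := {u | ∃ x y : ℤ, u = x * α + y * β + (α + β) / 2}

/-- The vertical edge lattice `E₁ = F + α/2`. -/
def latE1 (α β : ℝ) : Set ℝ := {u | ∃ x y : ℤ, u = x * α + y * β + α / 2}

/-- The horizontal edge lattice `E₂ = F + β/2`. -/
def latE2 (α β : ℝ) : Set ℝ := {u | ∃ x y : ℤ, u = x * α + y * β + β / 2}

/-- An `(m,n)`-periodic higher spin vertex configuration: a pair of finitely supported
multiplicity functions, supported on `E₁` resp. `E₂`, satisfying the current
conservation rule. -/
structure Config (α β : ℝ) (ℒ₁ ℒ₂ : ℝ → ℕ) : Prop where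
  supp1 : ∀ u : ℝ, ℒ₁ u ≠ 0 → u ∈ latE1 α β
  supp2 : ∀ u : ℝ, ℒ₂ u ≠ 0 → u ∈ latE2 α β
  fin1 : (Function.support ℒ₁).Finite
  fin2 : (Function.support ℒ₂).Finite
  conserv : ∀ v ∈ latV α β,
    ℒ₁ (v + β / 2) + ℒ₂ (v + α / 2) = ℒ₁ (v - β / 2) + ℒ₂ (v - α / 2)

lemma mySplit (L : ℝ → ℕ) (s : Finset ℝ) (t' t : ℝ) (h : t' ≤ t) :
    (∑ e ∈ s, if t' < e then L e else 0) =
      (∑ e ∈ s, if t' < e ∧ e ≤ t then L e else 0) + ∑ e ∈ s, if t < e then L e else 0 := by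
  rw [← Finset.sum_add_distrib]
  refine Finset.sum_congr rfl fun e _ => ?_
  rcases le_or_gt e t with h1 | h1
  · rw [if_neg (not_lt.2 h1)]
    by_cases h2 : t' < e
    · rw [if_pos h2, if_pos ⟨h2, h1⟩]; omega
    · rw [if_neg h2, if_neg (fun hc => h2 hc.1)]
  · rw [if_pos h1, if_pos (lt_of_le_of_lt h h1), if_neg (fun hc => absurd hc.2 (not_le.2 h1))]
    omega

lemma myStep (L : ℝ → ℕ) (s : Finset ℝ) (d t : ℝ) (hd : 0 < d)
    (hcos : ∀ e ∈ s, ∃ k : ℤ, e = t + k * d) (ht : t ∉ s → L t = 0) :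
    (∑ e ∈ s, if t - d < e then L e else 0) = (∑ e ∈ s, if t < e then L e else 0) + L t := by
  have hpt : ∀ e ∈ s, (if t - d < e then L e else 0)
      = (if t < e then L e else 0) + (if e = t then L e else 0) := by
    intro e he
    obtain ⟨k, hk⟩ := hcos e he
    rcases lt_trichotomy k 0 with h | h | h
    · have hk1 : (k : ℝ) ≤ -1 := by
        have : k ≤ -1 := by omega
        exact_mod_cast this
      have he1 : e ≤ t - d := by nlinarith
      rw [if_neg (not_lt.2 he1), if_neg (by intro hc; linarith),
        if_neg (by intro hc; rw [hc] at he1; linarith)]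
    · subst h
      have : e = t := by rw [hk]; push_cast; ring
      subst this
      rw [if_pos (by linarith), if_neg (lt_irrefl _), if_pos rfl]
      omega
    · have hk1 : (1 : ℝ) ≤ k := by exact_mod_cast h
      have he1 : t < e := by nlinarith
      rw [if_pos (by linarith), if_pos he1,
        if_neg (by intro hc; rw [hc] at he1; exact lt_irrefl _ he1)]
      omega
  rw [Finset.sum_congr rfl hpt, Finset.sum_add_distrib, Finset.sum_ite_eq' s t L]
  by_cases hts : t ∈ s
  · rw [if_pos hts]
  · rw [if_neg hts, ht hts]

/-- If moreover `α, β ∈ ℤ` with `α < 0 < β`, then for every `v ∈ V`: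
`Σ_{e∈E₁, v−β/2 < e ≤ v+β/2} ℒ₁(e) = Σ_{e∈E₂, v+α/2 < e ≤ v−α/2} ℒ₂(e)`. -/
theorem stmt3 (m n : ℕ) (hmn : Nat.Coprime m n) (α β : ℝ)
    (hαβ : (α, β) ≠ ((0 : ℝ), (0 : ℝ))) (hlin : (m : ℝ) * α + (n : ℝ) * β = 0)
    (ℒ₁ ℒ₂ : ℝ → ℕ) (hconf : Config α β ℒ₁ ℒ₂)
    (a b : ℤ) (ha : α = (a : ℝ)) (hb : β = (b : ℝ)) (hα : α < 0) (hβ : 0 < β) :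
    ∀ v ∈ latV α β,
      (∑ᶠ e : ℝ, if v - β / 2 < e ∧ e ≤ v + β / 2 then ℒ₁ e else 0) =
      (∑ᶠ e : ℝ, if v + α / 2 < e ∧ e ≤ v - α / 2 then ℒ₂ e else 0) := by
  subst ha hb
  intro v hv
  obtain ⟨xv, yv, hveq⟩ := hv
  have ha0 : (a : ℝ) < 0 := hα
  have hb0 : (0 : ℝ) < (b : ℝ) := hβ
  have hbz : b ≠ 0 := by
    intro h; rw [h] at hb0; norm_num at hb0
  -- the gcd step
  set d : ℝ := ((Int.gcd a b : ℕ) : ℝ) with hddef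
  have hdpos : 0 < d := by
    have : Int.gcd a b ≠ 0 := fun h => hbz (Int.gcd_eq_zero_iff.1 h).2
    have h2 := Nat.pos_of_ne_zero this
    rw [hddef]
    exact_mod_cast h2
  -- Bezout: d ∈ F
  obtain ⟨gx, gy, hgF⟩ : ∃ x y : ℤ, d = (x : ℝ) * a + (y : ℝ) * b := by
    refine ⟨Int.gcdA a b, Int.gcdB a b, ?_⟩
    have h := Int.gcd_eq_gcd_ab a b
    have h2 : ((Int.gcd a b : ℕ) : ℝ) = (a : ℝ) * (Int.gcdA a b : ℝ) + (b : ℝ) * (Int.gcdB a b : ℝ) := by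
      exact_mod_cast congrArg (fun z : ℤ => (z : ℝ)) h
    rw [hddef, h2]; ring
  -- divisibility: any F-element is a multiple of d
  have hdiff : ∀ x y : ℤ, ∃ k : ℤ, (x : ℝ) * a + (y : ℝ) * b = (k : ℝ) * d := by
    intro x y
    have hdvd : ((Int.gcd a b : ℕ) : ℤ) ∣ x * a + y * b :=
      dvd_add ((Int.gcd_dvd_left a b).mul_left x) ((Int.gcd_dvd_right a b).mul_left y)
    obtain ⟨k, hk⟩ := hdvd
    refine ⟨k, ?_⟩
    have : ((x * a + y * b : ℤ) : ℝ) = (((Int.gcd a b : ℕ) : ℤ) : ℝ) * (k : ℝ) := by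
      exact_mod_cast congrArg (fun z : ℤ => (z : ℝ)) hk
    push_cast at this ⊢
    rw [hddef]; push_cast; linarith
  -- shifted vertices stay in V
  have hVshift : ∀ k : ℤ, v + (k : ℝ) * d ∈ latV (a : ℝ) (b : ℝ) := by
    intro k
    refine ⟨xv + k * gx, yv + k * gy, ?_⟩
    rw [hveq, hgF]; push_cast; ring
  set s₁ : Finset ℝ := hconf.fin1.toFinset with hs₁
  set s₂ : Finset ℝ := hconf.fin2.toFinset with hs₂
  -- coset lemmas for the supports
  have hcos1 : ∀ t : ℝ, (∃ X Y : ℤ, t = (X : ℝ) * a + (Y : ℝ) * b + (a : ℝ) / 2) →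
      ∀ e ∈ s₁, ∃ k : ℤ, e = t + (k : ℝ) * d := by
    rintro t ⟨X, Y, hT⟩ e he
    have hsupp : ℒ₁ e ≠ 0 := by
      rw [hs₁, Set.Finite.mem_toFinset] at he; exact he
    obtain ⟨x, y, hE⟩ := hconf.supp1 e hsupp
    obtain ⟨k, hk⟩ := hdiff (x - X) (y - Y)
    refine ⟨k, ?_⟩
    push_cast at hk
    rw [hE, hT]; linarith
  have hcos2 : ∀ t : ℝ, (∃ X Y : ℤ, t = (X : ℝ) * a + (Y : ℝ) * b + (b : ℝ) / 2) →
      ∀ e ∈ s₂, ∃ k : ℤ, e = t + (k : ℝ) * d := by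
    rintro t ⟨X, Y, hT⟩ e he
    have hsupp : ℒ₂ e ≠ 0 := by
      rw [hs₂, Set.Finite.mem_toFinset] at he; exact he
    obtain ⟨x, y, hE⟩ := hconf.supp2 e hsupp
    obtain ⟨k, hk⟩ := hdiff (x - X) (y - Y)
    refine ⟨k, ?_⟩
    push_cast at hk
    rw [hE, hT]; linarith
  have hnz1 : ∀ t : ℝ, t ∉ s₁ → ℒ₁ t = 0 := by
    intro t ht
    by_contra h
    exact ht (by rw [hs₁, Set.Finite.mem_toFinset]; exact h)
  have hnz2 : ∀ t : ℝ, t ∉ s₂ → ℒ₂ t = 0 := by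
    intro t ht
    by_contra h
    exact ht (by rw [hs₂, Set.Finite.mem_toFinset]; exact h)
  -- tail sums
  set A : ℝ → ℕ := fun t => ∑ e ∈ s₁, if t < e then ℒ₁ e else 0 with hA
  set B : ℝ → ℕ := fun t => ∑ e ∈ s₂, if t < e then ℒ₂ e else 0 with hB
  -- bound on supports
  obtain ⟨M, hM⟩ : ∃ M : ℝ, ∀ e ∈ s₁ ∪ s₂, e ≤ M := Finset.exists_le _
  have hAzero : ∀ t : ℝ, M < t → A t = 0 := by
    intro t ht
    refine Finset.sum_eq_zero fun e he => ?_
    exact if_neg (not_lt.2 (le_of_lt (lt_of_le_of_lt (hM e (Finset.mem_union_left _ he)) ht)))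
  have hBzero : ∀ t : ℝ, M < t → B t = 0 := by
    intro t ht
    refine Finset.sum_eq_zero fun e he => ?_
    exact if_neg (not_lt.2 (le_of_lt (lt_of_le_of_lt (hM e (Finset.mem_union_right _ he)) ht)))
  -- choose K far beyond the support
  obtain ⟨K, hK⟩ : ∃ K : ℕ, (M - v + b - a) / d < (K : ℝ) := exists_nat_gt _
  have hKd : M - v + (b : ℝ) - (a : ℝ) < (K : ℝ) * d := by
    rw [div_lt_iff₀ hdpos] at hK
    linarith [hK]
  -- main downward induction
  have key : ∀ j : ℕ,
      A (v + (((K : ℤ) - j : ℤ) : ℝ) * d + (b : ℝ) / 2) + B (v + (((K : ℤ) - j : ℤ) : ℝ) * d + (a : ℝ) / 2)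
        = A (v + (((K : ℤ) - j : ℤ) : ℝ) * d - (b : ℝ) / 2) + B (v + (((K : ℤ) - j : ℤ) : ℝ) * d - (a : ℝ) / 2) := by
    intro j
    induction j with
    | zero =>
        have hcast : (((K : ℤ) - (0 : ℕ) : ℤ) : ℝ) = (K : ℝ) := by push_cast; ring
        rw [hcast]
        rw [hAzero _ (by linarith), hBzero _ (by linarith), hAzero _ (by linarith),
          hBzero _ (by linarith)]
    | succ j ih =>
        set k : ℤ := (K : ℤ) - (j + 1) with hkdef
        have hz1 : (K : ℤ) - j = k + 1 := by omega
        have hk1 : (((K : ℤ) - j : ℤ) : ℝ) = ((k + 1 : ℤ) : ℝ) :=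
          congrArg (fun z : ℤ => (z : ℝ)) hz1
        rw [hk1] at ih
        set w : ℝ := v + ((k + 1 : ℤ) : ℝ) * d with hw
        have hwV : w ∈ latV (a : ℝ) (b : ℝ) := hVshift (k + 1)
        obtain ⟨xw, yw, hweq⟩ := hwV
        -- rewrite the four shifted points as (reference − d)
        have e1 : v + ((k : ℤ) : ℝ) * d + (b : ℝ) / 2 = (w + (b : ℝ) / 2) - d := by
          rw [hw]; push_cast; ring
        have e2 : v + ((k : ℤ) : ℝ) * d + (a : ℝ) / 2 = (w + (a : ℝ) / 2) - d := by
          rw [hw]; push_cast; ring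
        have e3 : v + ((k : ℤ) : ℝ) * d - (b : ℝ) / 2 = (w - (b : ℝ) / 2) - d := by
          rw [hw]; push_cast; ring
        have e4 : v + ((k : ℤ) : ℝ) * d - (a : ℝ) / 2 = (w - (a : ℝ) / 2) - d := by
          rw [hw]; push_cast; ring
        have st1 : A (w + (b : ℝ) / 2 - d) = A (w + (b : ℝ) / 2) + ℒ₁ (w + (b : ℝ) / 2) :=
          myStep ℒ₁ s₁ d _ hdpos
            (hcos1 _ ⟨xw, yw + 1, by rw [hweq]; push_cast; ring⟩) (hnz1 _)
        have st2 : B (w + (a : ℝ) / 2 - d) = B (w + (a : ℝ) / 2) + ℒ₂ (w + (a : ℝ) / 2) :=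
          myStep ℒ₂ s₂ d _ hdpos
            (hcos2 _ ⟨xw + 1, yw, by rw [hweq]; push_cast; ring⟩) (hnz2 _)
        have st3 : A (w - (b : ℝ) / 2 - d) = A (w - (b : ℝ) / 2) + ℒ₁ (w - (b : ℝ) / 2) :=
          myStep ℒ₁ s₁ d _ hdpos
            (hcos1 _ ⟨xw, yw, by rw [hweq]; push_cast; ring⟩) (hnz1 _)
        have st4 : B (w - (a : ℝ) / 2 - d) = B (w - (a : ℝ) / 2) + ℒ₂ (w - (a : ℝ) / 2) :=
          myStep ℒ₂ s₂ d _ hdpos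
            (hcos2 _ ⟨xw, yw, by rw [hweq]; push_cast; ring⟩) (hnz2 _)
        have hcons := hconf.conserv w ⟨xw, yw, hweq⟩
        have hz2 : (K : ℤ) - ((j + 1 : ℕ) : ℤ) = k := by push_cast; omega
        have hk2 : (((K : ℤ) - ((j + 1 : ℕ) : ℤ) : ℤ) : ℝ) = ((k : ℤ) : ℝ) :=
          congrArg (fun z : ℤ => (z : ℝ)) hz2
        rw [hk2, e1, e2, e3, e4, st1, st2, st3, st4]
        omega
  -- specialize: j = K
  have hfin := key K
  have hcast0 : (((K : ℤ) - (K : ℕ) : ℤ) : ℝ) = 0 := by push_cast; ring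
  rw [hcast0] at hfin
  simp only [zero_mul, add_zero] at hfin
  -- convert goal finsums to finset sums
  have hg1 : (∑ᶠ e : ℝ, if v - (b : ℝ) / 2 < e ∧ e ≤ v + (b : ℝ) / 2 then ℒ₁ e else 0)
      = ∑ e ∈ s₁, if v - (b : ℝ) / 2 < e ∧ e ≤ v + (b : ℝ) / 2 then ℒ₁ e else 0 := by
    refine finsum_eq_finset_sum_of_support_subset _ ?_
    intro x hx
    rw [Function.mem_support] at hx
    have : ℒ₁ x ≠ 0 := by
      by_contra h0
      apply hx
      split_ifs <;> simp [h0]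
    rw [hs₁, Set.Finite.coe_toFinset]
    exact this
  have hg2 : (∑ᶠ e : ℝ, if v + (a : ℝ) / 2 < e ∧ e ≤ v - (a : ℝ) / 2 then ℒ₂ e else 0)
      = ∑ e ∈ s₂, if v + (a : ℝ) / 2 < e ∧ e ≤ v - (a : ℝ) / 2 then ℒ₂ e else 0 := by
    refine finsum_eq_finset_sum_of_support_subset _ ?_
    intro x hx
    rw [Function.mem_support] at hx
    have : ℒ₂ x ≠ 0 := by
      by_contra h0
      apply hx
      split_ifs <;> simp [h0]
    rw [hs₂, Set.Finite.coe_toFinset]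
    exact this
  rw [hg1, hg2]
  have sp1 := mySplit ℒ₁ s₁ (v - (b : ℝ) / 2) (v + (b : ℝ) / 2) (by linarith)
  have sp2 := mySplit ℒ₂ s₂ (v + (a : ℝ) / 2) (v - (a : ℝ) / 2) (by linarith)
  -- sp1 : A (v - b/2) = S₁ + A (v + b/2), sp2 : B (v + a/2) = S₂ + B (v - a/2)
  rw [hA, hB] at hfin
  simp only at hfin
  omega
end
end

section
/- The pair (P₁,P₂) satisfies the Mazorchuk–Turowska equation as an identity of polynomial functions: P₁(u+β/2)·P₂(u+α/2) = P₁(u−β/2)·P₂(u−α/2) for all u ∈ ℂ. -/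
open Complex

noncomputable section
open scoped Classical

/-- `Pᵢ(u) = ∏_{e} (u-e)^{ℒᵢ(e)}` as a function on `ℂ` (a finite product). -/
def PfunC (ℒ : ℝ → ℕ) (u : ℂ) : ℂ := ∏ᶠ e : ℝ, (u - (e : ℂ)) ^ ℒ e

/-- `Pᵢ(u) = ∏_{e} (u-e)^{ℒᵢ(e)}` as a real-valued function on `ℝ`. -/
def PfunR (ℒ : ℝ → ℕ) (u : ℝ) : ℝ := ∏ᶠ e : ℝ, (u - e) ^ ℒ e

/-- The pair `(P₁,P₂)` satisfies the Mazorchuk–Turowska equation: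
`P₁(u+β/2)·P₂(u+α/2) = P₁(u−β/2)·P₂(u−α/2)` for all `u ∈ ℂ`. -/
theorem stmt4 (m n : ℕ) (hmn : Nat.Coprime m n) (α β : ℝ)
    (hαβ : (α, β) ≠ ((0 : ℝ), (0 : ℝ))) (hlin : (m : ℝ) * α + (n : ℝ) * β = 0)
    (ℒ₁ ℒ₂ : ℝ → ℕ) (hconf : Config α β ℒ₁ ℒ₂) :
    ∀ u : ℂ,
      PfunC ℒ₁ (u + (β : ℂ) / 2) * PfunC ℒ₂ (u + (α : ℂ) / 2) =
      PfunC ℒ₁ (u - (β : ℂ) / 2) * PfunC ℒ₂ (u - (α : ℂ) / 2) := by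

  intro u
  -- reindexing lemma
  have shift : ∀ (ℒ : ℝ → ℕ) (c : ℝ),
      PfunC ℒ (u + (c : ℂ)) = ∏ᶠ e : ℝ, (u - (e : ℂ)) ^ ℒ (e + c) := by
    intro ℒ c
    unfold PfunC
    rw [← finprod_comp_equiv (Equiv.addRight c)]
    apply finprod_congr
    intro e
    simp only [Equiv.coe_addRight]
    congr 1
    push_cast
    ring
  -- finiteness of multiplicative supports
  have fin : ∀ (ℒ : ℝ → ℕ), (Function.support ℒ).Finite → ∀ (c : ℝ),
      (Function.mulSupport fun e : ℝ => (u - (e : ℂ)) ^ ℒ (e + c)).Finite := by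
    intro ℒ h c
    apply (h.image (fun x => x - c)).subset
    intro e he
    have hne : ℒ (e + c) ≠ 0 := by
      intro h0
      apply he
      simp [Function.mulSupport, h0]
    exact ⟨e + c, hne, by ring⟩
  -- key pointwise exponent identity
  have key : ∀ e : ℝ, ℒ₁ (e + β / 2) + ℒ₂ (e + α / 2)
      = ℒ₁ (e - β / 2) + ℒ₂ (e - α / 2) := by
    intro e
    by_cases hv : e ∈ latV α β
    · exact hconf.conserv e hv
    · have h1 : ℒ₁ (e + β / 2) = 0 := by
        by_contra h
        obtain ⟨x, y, hxy⟩ := hconf.supp1 _ h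
        exact hv ⟨x, y - 1, by push_cast; linarith⟩
      have h2 : ℒ₂ (e + α / 2) = 0 := by
        by_contra h
        obtain ⟨x, y, hxy⟩ := hconf.supp2 _ h
        exact hv ⟨x - 1, y, by push_cast; linarith⟩
      have h3 : ℒ₁ (e - β / 2) = 0 := by
        by_contra h
        obtain ⟨x, y, hxy⟩ := hconf.supp1 _ h
        exact hv ⟨x, y, by push_cast; linarith⟩
      have h4 : ℒ₂ (e - α / 2) = 0 := by
        by_contra h
        obtain ⟨x, y, hxy⟩ := hconf.supp2 _ h
        exact hv ⟨x, y, by push_cast; linarith⟩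
      rw [h1, h2, h3, h4]
  have e1 : u + (β : ℂ) / 2 = u + ((β / 2 : ℝ) : ℂ) := by push_cast; ring
  have e2 : u + (α : ℂ) / 2 = u + ((α / 2 : ℝ) : ℂ) := by push_cast; ring
  have e3 : u - (β : ℂ) / 2 = u + ((-(β / 2) : ℝ) : ℂ) := by push_cast; ring
  have e4 : u - (α : ℂ) / 2 = u + ((-(α / 2) : ℝ) : ℂ) := by push_cast; ring
  rw [e1, e2, e3, e4, shift ℒ₁ (β / 2), shift ℒ₂ (α / 2),
    shift ℒ₁ (-(β / 2)), shift ℒ₂ (-(α / 2)),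
    ← finprod_mul_distrib (fin ℒ₁ hconf.fin1 (β / 2)) (fin ℒ₂ hconf.fin2 (α / 2)),
    ← finprod_mul_distrib (fin ℒ₁ hconf.fin1 (-(β / 2))) (fin ℒ₂ hconf.fin2 (-(α / 2)))]
  apply finprod_congr
  intro e
  rw [← pow_add, ← pow_add]
  congr 1
  have := key e
  simpa [sub_eq_add_neg] using this


end
end

section
/- There exists a pair of functions (q₁,q₂) with qᵢ: Eᵢ → ℂ such that (i) qᵢ(e)² = Pᵢ(e) for all e ∈ Eᵢ and i ∈ {1,2}, and (ii) (q₁,q₂) satisfies the Mazorchuk–Turowska equation: q₁(u+β/2)q₂(u+α/2) = q₁(u−β/2)q₂(u−α/2) for all u ∈ V. -/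
open Complex

noncomputable section
open scoped Classical

namespace Stmt5Aux

open Function

lemma support_shift_finite (ℒ : ℝ → ℕ) (h : (support ℒ).Finite) (c : ℝ) :
    (support fun w : ℝ => ℒ (w + c)).Finite := by
  have he : (support fun w : ℝ => ℒ (w + c)) = (fun w : ℝ => w + c) ⁻¹' support ℒ := rfl
  rw [he]
  exact h.preimage ((add_left_injective c).injOn)

lemma mulSupport_pow_subset {M : Type*} [Monoid M] (m : ℝ → M) (ℒ : ℝ → ℕ) :
    (mulSupport fun f => m f ^ ℒ f) ⊆ support ℒ := by
  intro f hf
  simp only [mem_mulSupport] at hf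
  simp only [mem_support]
  intro h0
  exact hf (by rw [h0, pow_zero])

/-- Reindexing + combining the two finite products into one over a common index. -/
lemma combine (σ : ℝ → ℂ) (ℒ₁ ℒ₂ : ℝ → ℕ) (h1 : (support ℒ₁).Finite)
    (h2 : (support ℒ₂).Finite) (u a b : ℝ) :
    (∏ᶠ f : ℝ, σ (u + b - f) ^ ℒ₁ f) * (∏ᶠ f : ℝ, σ (u + a - f) ^ ℒ₂ f)
      = ∏ᶠ w : ℝ, σ (u - w) ^ (ℒ₁ (w + b) + ℒ₂ (w + a)) := by
  have e1 : (∏ᶠ f : ℝ, σ (u + b - f) ^ ℒ₁ f) = ∏ᶠ w : ℝ, σ (u - w) ^ ℒ₁ (w + b) := by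
    rw [← finprod_comp (fun w : ℝ => w + b) (Equiv.addRight b).bijective]
    exact finprod_congr fun w => by rw [show u + b - (w + b) = u - w by ring]
  have e2 : (∏ᶠ f : ℝ, σ (u + a - f) ^ ℒ₂ f) = ∏ᶠ w : ℝ, σ (u - w) ^ ℒ₂ (w + a) := by
    rw [← finprod_comp (fun w : ℝ => w + a) (Equiv.addRight a).bijective]
    exact finprod_congr fun w => by rw [show u + a - (w + a) = u - w by ring]
  rw [e1, e2, ← finprod_mul_distrib
    ((support_shift_finite ℒ₁ h1 b).subset (mulSupport_pow_subset _ _))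
    ((support_shift_finite ℒ₂ h2 a).subset (mulSupport_pow_subset _ _))]
  exact finprod_congr fun w => (pow_add _ _ _).symm

/-- The square of `∏ᶠ f, σ (e - f) ^ ℒ f` is `PfunR ℒ e`, for any square-root map `σ`. -/
lemma sq_q (σ : ℝ → ℂ) (hσ : ∀ x : ℝ, σ x ^ 2 = (x : ℂ)) (ℒ : ℝ → ℕ)
    (h : (support ℒ).Finite) (e : ℝ) :
    (∏ᶠ f : ℝ, σ (e - f) ^ ℒ f) ^ 2 = ((PfunR ℒ e : ℝ) : ℂ) := by
  rw [finprod_pow (h.subset (mulSupport_pow_subset _ _))]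
  have hc : ((PfunR ℒ e : ℝ) : ℂ) = ∏ᶠ f : ℝ, (((e - f : ℝ) : ℂ)) ^ ℒ f := by
    show Complex.ofRealHom.toMonoidHom (PfunR ℒ e) = _
    rw [PfunR, MonoidHom.map_finprod Complex.ofRealHom.toMonoidHom
      (h.subset (mulSupport_pow_subset _ _))]
    exact finprod_congr fun f => by
      simp only [RingHom.toMonoidHom_eq_coe, MonoidHom.coe_coe, map_pow,
        Complex.ofRealHom_eq_coe]
  rw [hc]
  exact finprod_congr fun f => by rw [← pow_mul, mul_comm (ℒ f) 2, pow_mul, hσ]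

/-- Global current conservation: off the vertex lattice all four terms vanish. -/
lemma key (α β : ℝ) (ℒ₁ ℒ₂ : ℝ → ℕ) (hc : Config α β ℒ₁ ℒ₂) (w : ℝ) :
    ℒ₁ (w + β / 2) + ℒ₂ (w + α / 2) = ℒ₁ (w + -(β / 2)) + ℒ₂ (w + -(α / 2)) := by
  by_cases hw : w ∈ latV α β
  · simpa [sub_eq_add_neg] using hc.conserv w hw
  · have z1 : ℒ₁ (w + β / 2) = 0 := by
      by_contra h
      obtain ⟨x, y, hxy⟩ := hc.supp1 _ h
      exact hw ⟨x, y - 1, by push_cast; linarith⟩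
    have z2 : ℒ₂ (w + α / 2) = 0 := by
      by_contra h
      obtain ⟨x, y, hxy⟩ := hc.supp2 _ h
      exact hw ⟨x - 1, y, by push_cast; linarith⟩
    have z3 : ℒ₁ (w + -(β / 2)) = 0 := by
      by_contra h
      obtain ⟨x, y, hxy⟩ := hc.supp1 _ h
      exact hw ⟨x, y, by push_cast; linarith⟩
    have z4 : ℒ₂ (w + -(α / 2)) = 0 := by
      by_contra h
      obtain ⟨x, y, hxy⟩ := hc.supp2 _ h
      exact hw ⟨x, y, by push_cast; linarith⟩
    rw [z1, z2, z3, z4]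

end Stmt5Aux

/-- There is a pair of functions `(q₁,q₂)` with `qᵢ : Eᵢ → ℂ` such that
(i) `qᵢ(e)² = Pᵢ(e)` for all `e ∈ Eᵢ`, and (ii) `(q₁,q₂)` satisfies the
Mazorchuk–Turowska equation on `V`. -/
theorem stmt5 (m n : ℕ) (hmn : Nat.Coprime m n) (α β : ℝ)
    (hαβ : (α, β) ≠ ((0 : ℝ), (0 : ℝ))) (hlin : (m : ℝ) * α + (n : ℝ) * β = 0)
    (ℒ₁ ℒ₂ : ℝ → ℕ) (hconf : Config α β ℒ₁ ℒ₂) :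
    ∃ q₁ q₂ : ℝ → ℂ,
      (∀ e ∈ latE1 α β, q₁ e ^ 2 = (PfunR ℒ₁ e : ℂ)) ∧
      (∀ e ∈ latE2 α β, q₂ e ^ 2 = (PfunR ℒ₂ e : ℂ)) ∧
      (∀ u ∈ latV α β,
        q₁ (u + β / 2) * q₂ (u + α / 2) = q₁ (u - β / 2) * q₂ (u - α / 2)) := by
  classical
  -- a fixed square-root function on ℂ (restricted to real inputs)
  set σ : ℝ → ℂ := fun x => if (x : ℂ) = 0 then 0 else Complex.exp (Complex.log x / 2)
    with hσdef
  have hσ : ∀ x : ℝ, σ x ^ 2 = (x : ℂ) := by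
    intro x
    by_cases h : x = 0
    · simp [hσdef, h]
    · have h' : (x : ℂ) ≠ 0 := by exact_mod_cast h
      simp only [hσdef, if_neg h']
      rw [sq, ← Complex.exp_add, add_halves, Complex.exp_log h']
  refine ⟨fun e => ∏ᶠ f : ℝ, σ (e - f) ^ ℒ₁ f, fun e => ∏ᶠ f : ℝ, σ (e - f) ^ ℒ₂ f,
    fun e _ => Stmt5Aux.sq_q σ hσ ℒ₁ hconf.fin1 e,
    fun e _ => Stmt5Aux.sq_q σ hσ ℒ₂ hconf.fin2 e, ?_⟩
  intro u _
  rw [Stmt5Aux.combine σ ℒ₁ ℒ₂ hconf.fin1 hconf.fin2 u (α / 2) (β / 2),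
    show u - β / 2 = u + -(β / 2) by ring, show u - α / 2 = u + -(α / 2) by ring,
    Stmt5Aux.combine σ ℒ₁ ℒ₂ hconf.fin1 hconf.fin2 u (-(α / 2)) (-(β / 2))]
  exact finprod_congr fun w => by rw [Stmt5Aux.key α β ℒ₁ ℒ₂ hconf w]

end
end

section
/- The functions qᵢ: Eᵢ → ℂ defined by qᵢ(e) = 𝐢^{lᵢ(e)}·|Pᵢ(e)|^{1/2} (where 𝐢² = −1) satisfy (i) qᵢ(e)² = Pᵢ(e) for all e ∈ Eᵢ, i ∈ {1,2}, and (ii) the Mazorchuk–Turowska equation q₁(u+β/2)q₂(u+α/2) = q₁(u−β/2)q₂(u−α/2) for all u ∈ V. -/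
open Complex

noncomputable section
open scoped Classical

/-- `lᵢ(u) = Σ_{e > u} ℒᵢ(e)`. -/
def lfun (ℒ : ℝ → ℕ) (u : ℝ) : ℕ := ∑ᶠ e : ℝ, if u < e then ℒ e else 0

/-- The square root `qᵢ(e) = 𝐢^{lᵢ(e)}·|Pᵢ(e)|^{1/2}`. -/
def qfun (ℒ : ℝ → ℕ) (e : ℝ) : ℂ := Complex.I ^ lfun ℒ e * (Real.sqrt |PfunR ℒ e| : ℂ)

section aux

lemma PfunR_eq (ℒ : ℝ → ℕ) (h : (Function.support ℒ).Finite) (u : ℝ) :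
    PfunR ℒ u = ∏ e ∈ h.toFinset, (u - e) ^ ℒ e := by
  apply finprod_eq_prod_of_mulSupport_subset
  intro e he
  simp only [Function.mem_mulSupport] at he
  simp only [Set.Finite.coe_toFinset, Function.mem_support]
  intro h0; exact he (by rw [h0, pow_zero])

lemma lfun_eq (ℒ : ℝ → ℕ) (h : (Function.support ℒ).Finite) (u : ℝ) :
    lfun ℒ u = ∑ e ∈ h.toFinset, if u < e then ℒ e else 0 := by
  apply finsum_eq_sum_of_support_subset
  intro e he
  simp only [Function.mem_support] at he
  simp only [Set.Finite.coe_toFinset, Function.mem_support]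
  intro h0; exact he (by simp [h0])

lemma P_sign (ℒ : ℝ → ℕ) (h : (Function.support ℒ).Finite) (u : ℝ) :
    PfunR ℒ u = (-1 : ℝ) ^ lfun ℒ u * |PfunR ℒ u| := by
  rw [PfunR_eq ℒ h u, lfun_eq ℒ h u, Finset.abs_prod,
    ← Finset.prod_pow_eq_pow_sum, ← Finset.prod_mul_distrib]
  apply Finset.prod_congr rfl
  intro e _
  by_cases hlt : u < e
  · rw [if_pos hlt, _root_.abs_pow, abs_of_neg (by linarith : u - e < 0), ← mul_pow]
    ring_nf
  · rw [if_neg hlt, pow_zero, one_mul, _root_.abs_pow,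
      _root_.abs_of_nonneg (by linarith [not_lt.mp hlt] : (0:ℝ) ≤ u - e)]

lemma q_sq (ℒ : ℝ → ℕ) (h : (Function.support ℒ).Finite) (u : ℝ) :
    qfun ℒ u ^ 2 = (PfunR ℒ u : ℂ) := by
  have h1 : ((Real.sqrt |PfunR ℒ u| : ℝ) : ℂ) ^ 2 = ((|PfunR ℒ u| : ℝ) : ℂ) := by
    rw [← Complex.ofReal_pow, Real.sq_sqrt (abs_nonneg _)]
  rw [qfun, mul_pow, h1]
  have h2 : (Complex.I ^ lfun ℒ u) ^ 2 = ((-1 : ℝ) : ℂ) ^ lfun ℒ u := by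
    rw [← pow_mul, mul_comm, pow_mul, Complex.I_sq]; push_cast; ring
  rw [h2, ← Complex.ofReal_pow, ← Complex.ofReal_mul, ← P_sign ℒ h u]

lemma conserv' {α β : ℝ} {ℒ₁ ℒ₂ : ℝ → ℕ} (hconf : Config α β ℒ₁ ℒ₂) (v : ℝ) :
    ℒ₁ (v + β / 2) + ℒ₂ (v + α / 2) = ℒ₁ (v - β / 2) + ℒ₂ (v - α / 2) := by
  by_cases hv : v ∈ latV α β
  · exact hconf.conserv v hv
  · have h1 : ℒ₁ (v + β / 2) = 0 := by
      by_contra h; obtain ⟨x, y, hxy⟩ := hconf.supp1 _ h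
      exact hv ⟨x, y - 1, by push_cast; linarith⟩
    have h2 : ℒ₂ (v + α / 2) = 0 := by
      by_contra h; obtain ⟨x, y, hxy⟩ := hconf.supp2 _ h
      exact hv ⟨x - 1, y, by push_cast; linarith⟩
    have h3 : ℒ₁ (v - β / 2) = 0 := by
      by_contra h; obtain ⟨x, y, hxy⟩ := hconf.supp1 _ h
      exact hv ⟨x, y, by push_cast; linarith⟩
    have h4 : ℒ₂ (v - α / 2) = 0 := by
      by_contra h; obtain ⟨x, y, hxy⟩ := hconf.supp2 _ h
      exact hv ⟨x, y, by push_cast; linarith⟩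
    rw [h1, h2, h3, h4]

lemma PfunR_shift (ℒ : ℝ → ℕ) (u c : ℝ) :
    PfunR ℒ (u + c) = ∏ᶠ v : ℝ, (u - v) ^ ℒ (v + c) := by
  rw [PfunR]
  exact (finprod_eq_of_bijective (fun v : ℝ => v + c) (Equiv.addRight c).bijective
    (fun v => by ring_nf)).symm

lemma lfun_shift (ℒ : ℝ → ℕ) (u c : ℝ) :
    lfun ℒ (u + c) = ∑ᶠ v : ℝ, if u < v then ℒ (v + c) else 0 := by
  rw [lfun]
  refine (finsum_eq_of_bijective (fun v : ℝ => v + c) (Equiv.addRight c).bijective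
    (fun v => ?_)).symm
  simp [add_lt_add_iff_right]

lemma fin_shift (ℒ : ℝ → ℕ) (h : (Function.support ℒ).Finite) (u c : ℝ) :
    (Function.mulSupport fun v : ℝ => (u - v) ^ ℒ (v + c)).Finite := by
  apply Set.Finite.subset (h.preimage ((add_left_injective c).injOn))
  intro v hv
  simp only [Function.mem_mulSupport] at hv
  simp only [Set.mem_preimage, Function.mem_support]
  intro h0; exact hv (by rw [h0, pow_zero])

lemma fin_shift' (ℒ : ℝ → ℕ) (h : (Function.support ℒ).Finite) (u c : ℝ) :
    (Function.support fun v : ℝ => if u < v then ℒ (v + c) else 0).Finite := by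
  apply Set.Finite.subset (h.preimage ((add_left_injective c).injOn))
  intro v hv
  simp only [Function.mem_support] at hv
  simp only [Set.mem_preimage, Function.mem_support]
  intro h0; exact hv (by simp [h0])

lemma prod_merge {α β : ℝ} {ℒ₁ ℒ₂ : ℝ → ℕ} (hconf : Config α β ℒ₁ ℒ₂) (u : ℝ) :
    PfunR ℒ₁ (u + β / 2) * PfunR ℒ₂ (u + α / 2) =
      PfunR ℒ₁ (u - β / 2) * PfunR ℒ₂ (u - α / 2) := by
  have key : ∀ (c d : ℝ),
      PfunR ℒ₁ (u + c) * PfunR ℒ₂ (u + d) =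
        ∏ᶠ v : ℝ, (u - v) ^ (ℒ₁ (v + c) + ℒ₂ (v + d)) := by
    intro c d
    rw [PfunR_shift ℒ₁ u c, PfunR_shift ℒ₂ u d,
      ← finprod_mul_distrib (fin_shift ℒ₁ hconf.fin1 u c) (fin_shift ℒ₂ hconf.fin2 u d)]
    exact finprod_congr fun v => (pow_add _ _ _).symm
  have e1 : u - β / 2 = u + (-(β / 2)) := by ring
  have e2 : u - α / 2 = u + (-(α / 2)) := by ring
  rw [key (β / 2) (α / 2), e1, e2, key (-(β / 2)) (-(α / 2))]
  refine finprod_congr fun v => ?_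
  congr 1
  have := conserv' hconf v
  rw [sub_eq_add_neg, sub_eq_add_neg] at this
  exact this

lemma l_merge {α β : ℝ} {ℒ₁ ℒ₂ : ℝ → ℕ} (hconf : Config α β ℒ₁ ℒ₂) (u : ℝ) :
    lfun ℒ₁ (u + β / 2) + lfun ℒ₂ (u + α / 2) =
      lfun ℒ₁ (u - β / 2) + lfun ℒ₂ (u - α / 2) := by
  have key : ∀ (c d : ℝ),
      lfun ℒ₁ (u + c) + lfun ℒ₂ (u + d) =
        ∑ᶠ v : ℝ, if u < v then ℒ₁ (v + c) + ℒ₂ (v + d) else 0 := by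
    intro c d
    rw [lfun_shift ℒ₁ u c, lfun_shift ℒ₂ u d,
      ← finsum_add_distrib (fin_shift' ℒ₁ hconf.fin1 u c) (fin_shift' ℒ₂ hconf.fin2 u d)]
    refine finsum_congr fun v => ?_
    by_cases h : u < v <;> simp [h]
  have e1 : u - β / 2 = u + (-(β / 2)) := by ring
  have e2 : u - α / 2 = u + (-(α / 2)) := by ring
  rw [key (β / 2) (α / 2), e1, e2, key (-(β / 2)) (-(α / 2))]
  refine finsum_congr fun v => ?_
  congr 1
  have := conserv' hconf v
  rw [sub_eq_add_neg, sub_eq_add_neg] at this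
  exact this

end aux

/-- The explicit functions `qᵢ(e) = 𝐢^{lᵢ(e)}·|Pᵢ(e)|^{1/2}` satisfy
(i) `qᵢ(e)² = Pᵢ(e)` for all `e ∈ Eᵢ`, and (ii) the Mazorchuk–Turowska equation on `V`. -/
theorem stmt6 (m n : ℕ) (hmn : Nat.Coprime m n) (α β : ℝ)
    (hαβ : (α, β) ≠ ((0 : ℝ), (0 : ℝ))) (hlin : (m : ℝ) * α + (n : ℝ) * β = 0)
    (ℒ₁ ℒ₂ : ℝ → ℕ) (hconf : Config α β ℒ₁ ℒ₂) :
    (∀ e ∈ latE1 α β, qfun ℒ₁ e ^ 2 = (PfunR ℒ₁ e : ℂ)) ∧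
    (∀ e ∈ latE2 α β, qfun ℒ₂ e ^ 2 = (PfunR ℒ₂ e : ℂ)) ∧
    (∀ u ∈ latV α β,
      qfun ℒ₁ (u + β / 2) * qfun ℒ₂ (u + α / 2) =
      qfun ℒ₁ (u - β / 2) * qfun ℒ₂ (u - α / 2)) := by
  refine ⟨fun e _ => q_sq ℒ₁ hconf.fin1 e, fun e _ => q_sq ℒ₂ hconf.fin2 e, fun u _ => ?_⟩
  unfold qfun
  rw [mul_mul_mul_comm, ← pow_add, mul_mul_mul_comm, ← pow_add, l_merge hconf u]
  congr 1
  rw [← Complex.ofReal_mul, ← Complex.ofReal_mul, ← Real.sqrt_mul (abs_nonneg _),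
    ← Real.sqrt_mul (abs_nonneg _), ← abs_mul, ← abs_mul, prod_merge hconf u]

end
end

section
/- (Eight-vertex property of the internal sign configuration.) Let v ∈ V be such that the four real numbers P₁(v+β/2), P₁(v−β/2), P₂(v+α/2), P₂(v−α/2) are all nonzero. Then sgn(P₁(v+β/2))·sgn(P₂(v+α/2)) = sgn(P₁(v−β/2))·sgn(P₂(v−α/2)); equivalently, the number of edges among these four at which the corresponding value of Pᵢ is negative is even. -/
open Complex

noncomputable section
open scoped Classical

/-- Sign of P equals (-1)^(number of roots above u, with multiplicity). -/
lemma sign_pfun (ℒ : ℝ → ℕ) (hfin : (Function.support ℒ).Finite) (u : ℝ)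
    (hu : PfunR ℒ u ≠ 0) :
    Real.sign (PfunR ℒ u)
      = (-1 : ℝ) ^ (∑ e ∈ hfin.toFinset, if u < e then ℒ e else 0) := by
  have hP : PfunR ℒ u = ∏ e ∈ hfin.toFinset, (u - e) ^ ℒ e := by
    apply finprod_eq_prod_of_mulSupport_subset
    intro e he
    simp only [Function.mem_mulSupport] at he
    simp only [Set.Finite.coe_toFinset, Function.mem_support]
    intro h0; exact he (by rw [h0, pow_zero])
  have hfact : PfunR ℒ u
      = (-1 : ℝ) ^ (∑ e ∈ hfin.toFinset, if u < e then ℒ e else 0)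
        * ∏ e ∈ hfin.toFinset, |u - e| ^ ℒ e := by
    rw [hP, ← Finset.prod_pow_eq_pow_sum, ← Finset.prod_mul_distrib]
    apply Finset.prod_congr rfl
    intro e _
    by_cases h : u < e
    · rw [if_pos h, abs_of_neg (by linarith : u - e < 0), ← mul_pow, neg_one_mul, neg_neg]
    · rw [if_neg h, pow_zero, one_mul, _root_.abs_of_nonneg (by linarith [le_of_not_gt h] : (0:ℝ) ≤ u - e)]
  have hQ : 0 < ∏ e ∈ hfin.toFinset, |u - e| ^ ℒ e := by
    rcases (Finset.prod_nonneg (fun e _ => pow_nonneg (abs_nonneg (u - e)) (ℒ e))).lt_or_eq with h | h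
    · exact h
    · exfalso; apply hu; rw [hfact, ← h, mul_zero]
  rcases Nat.even_or_odd (∑ e ∈ hfin.toFinset, if u < e then ℒ e else 0) with h | h
  · rw [h.neg_one_pow] at hfact ⊢
    rw [hfact, one_mul, Real.sign_of_pos hQ]
  · rw [h.neg_one_pow] at hfact ⊢
    rw [hfact, neg_one_mul, Real.sign_of_neg (by linarith)]

/-- One step of the cumulative sum. -/
lemma natSum_step (a : ℤ → ℕ) (ha : (Function.support a).Finite) (k : ℤ) :
    (∑ j ∈ ha.toFinset, if k < j then a j else 0)
      = a (k + 1) + ∑ j ∈ ha.toFinset, if k + 1 < j then a j else 0 := by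
  have h1 : ∀ j ∈ ha.toFinset, (if k < j then a j else 0)
      = (if j = k + 1 then a j else 0) + (if k + 1 < j then a j else 0) := by
    intro j _; split_ifs <;> omega
  rw [Finset.sum_congr rfl h1, Finset.sum_add_distrib,
    Finset.sum_ite_eq' ha.toFinset (k + 1) a]
  congr 1
  by_cases h : k + 1 ∈ ha.toFinset
  · rw [if_pos h]
  · rw [if_neg h]
    simp only [Set.Finite.mem_toFinset, Function.mem_support, not_not] at h
    omega

/-- Key telescoping lemma: conservation implies equality of tail-sum combinations. -/
lemma key_tel (a b : ℤ → ℕ) (ha : (Function.support a).Finite)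
    (hb : (Function.support b).Finite) (M N : ℤ)
    (hc : ∀ k : ℤ, a (k + M) + b (k - N) = a k + b k) (k : ℤ) :
    ((∑ j ∈ ha.toFinset, if k + M < j then a j else 0)
      + ∑ j ∈ hb.toFinset, if k - N < j then b j else 0)
    = (∑ j ∈ ha.toFinset, if k < j then a j else 0)
      + ∑ j ∈ hb.toFinset, if k < j then b j else 0 := by
  set Na : ℤ → ℕ := fun c => ∑ j ∈ ha.toFinset, if c < j then a j else 0 with hNa
  set Nb : ℤ → ℕ := fun c => ∑ j ∈ hb.toFinset, if c < j then b j else 0 with hNb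
  show Na (k + M) + Nb (k - N) = Na k + Nb k
  obtain ⟨Ka, hKa⟩ := ha.bddAbove
  obtain ⟨Kb, hKb⟩ := hb.bddAbove
  set K : ℤ := max Ka Kb with hK
  have vanish_a : ∀ c : ℤ, K ≤ c → Na c = 0 := by
    intro c hc'
    apply Finset.sum_eq_zero
    intro j hj
    rw [Set.Finite.mem_toFinset] at hj
    have : j ≤ Ka := hKa hj
    rw [if_neg (by omega)]
  have vanish_b : ∀ c : ℤ, K ≤ c → Nb c = 0 := by
    intro c hc'
    apply Finset.sum_eq_zero
    intro j hj
    rw [Set.Finite.mem_toFinset] at hj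
    have : j ≤ Kb := hKb hj
    rw [if_neg (by omega)]
  set K₀ : ℤ := K + M.natAbs + N.natAbs with hK₀
  have main : ∀ d : ℕ, ∀ c : ℤ, K₀ ≤ c + d → Na (c + M) + Nb (c - N) = Na c + Nb c := by
    intro d
    induction d with
    | zero =>
      intro c hcd
      simp only [Nat.cast_zero, add_zero] at hcd
      rw [vanish_a _ (by omega), vanish_b _ (by omega), vanish_a _ (by omega),
        vanish_b _ (by omega)]
    | succ d ih =>
      intro c hcd
      by_cases h : K₀ ≤ c + d
      · exact ih c h
      · have h1 := ih (c + 1) (by push_cast at hcd ⊢; omega)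
        have s1 : Na (c + M) = a (c + M + 1) + Na (c + M + 1) := natSum_step a ha _
        have s2 : Nb (c - N) = b (c - N + 1) + Nb (c - N + 1) := natSum_step b hb _
        have s3 : Na c = a (c + 1) + Na (c + 1) := natSum_step a ha _
        have s4 : Nb c = b (c + 1) + Nb (c + 1) := natSum_step b hb _
        have hcc := hc (c + 1)
        have e1 : c + M + 1 = c + 1 + M := by ring
        have e2 : c - N + 1 = c + 1 - N := by ring
        rw [e1] at s1
        rw [e2] at s2
        omega
  exact main (K₀ - k).toNat k (by omega)

lemma reindex_sum (γ c : ℝ) (hγ : 0 < γ) (ℒ : ℝ → ℕ) (hfin : (Function.support ℒ).Finite)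
    (hsupp : ∀ e : ℝ, ℒ e ≠ 0 → ∃ j : ℤ, e = (j : ℝ) * γ + c)
    (ha : (Function.support (fun j : ℤ => ℒ ((j : ℝ) * γ + c))).Finite) (k₀ : ℤ) :
    (∑ e ∈ hfin.toFinset, if (k₀ : ℝ) * γ + c < e then ℒ e else 0)
      = ∑ j ∈ ha.toFinset, if k₀ < j then ℒ ((j : ℝ) * γ + c) else 0 := by
  have hinj : Function.Injective (fun j : ℤ => (j : ℝ) * γ + c) := by
    intro i j h
    simp only [add_left_inj] at h
    exact_mod_cast mul_right_cancel₀ (ne_of_gt hγ) h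
  have himg : hfin.toFinset = ha.toFinset.image (fun j : ℤ => (j : ℝ) * γ + c) := by
    ext e
    simp only [Set.Finite.mem_toFinset, Function.mem_support, Finset.mem_image]
    constructor
    · intro he
      obtain ⟨j, rfl⟩ := hsupp e he
      exact ⟨j, by simpa [Set.Finite.mem_toFinset] using he, rfl⟩
    · rintro ⟨j, hj, rfl⟩
      simpa [Set.Finite.mem_toFinset] using hj
  rw [himg, Finset.sum_image (fun i _ j _ h => hinj h)]
  apply Finset.sum_congr rfl
  intro j _
  have : ((k₀ : ℝ) * γ + c < (j : ℝ) * γ + c) ↔ (k₀ < j) := by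
    rw [add_lt_add_iff_right, mul_lt_mul_iff_left₀ hγ, Int.cast_lt]
  simp only [this]


lemma sign_eq_latt (γ c : ℝ) (hγ : 0 < γ) (ℒ : ℝ → ℕ)
    (hfin : (Function.support ℒ).Finite)
    (hsupp : ∀ e : ℝ, ℒ e ≠ 0 → ∃ j : ℤ, e = (j : ℝ) * γ + c)
    (ha : (Function.support (fun j : ℤ => ℒ ((j : ℝ) * γ + c))).Finite) (k₀ : ℤ)
    (u : ℝ) (hu : u = (k₀ : ℝ) * γ + c) (hne : PfunR ℒ u ≠ 0) :
    Real.sign (PfunR ℒ u)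
      = (-1 : ℝ) ^ (∑ j ∈ ha.toFinset, if k₀ < j then ℒ ((j : ℝ) * γ + c) else 0) := by
  subst hu
  rw [sign_pfun ℒ hfin _ hne, reindex_sum γ c hγ ℒ hfin hsupp ha k₀]

lemma pfun_of_zero (ℒ : ℝ → ℕ) (hz : ∀ e, ℒ e = 0) (u : ℝ) : PfunR ℒ u = 1 := by
  rw [PfunR, finprod_congr (fun e => by rw [hz e, pow_zero] : ∀ e : ℝ, (u - e) ^ ℒ e = 1)]
  exact finprod_one

/-- Eight-vertex property of the internal sign configuration: if the values of
`P₁, P₂` at the four edges around a vertex `v ∈ V` are all nonzero, then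
`sgn(P₁(v+β/2))·sgn(P₂(v+α/2)) = sgn(P₁(v−β/2))·sgn(P₂(v−α/2))`. -/
theorem stmt8 (m n : ℕ) (hmn : Nat.Coprime m n) (α β : ℝ)
    (hαβ : (α, β) ≠ ((0 : ℝ), (0 : ℝ))) (hlin : (m : ℝ) * α + (n : ℝ) * β = 0)
    (ℒ₁ ℒ₂ : ℝ → ℕ) (hconf : Config α β ℒ₁ ℒ₂) :
    ∀ v ∈ latV α β,
      PfunR ℒ₁ (v + β / 2) ≠ 0 → PfunR ℒ₁ (v - β / 2) ≠ 0 →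
      PfunR ℒ₂ (v + α / 2) ≠ 0 → PfunR ℒ₂ (v - α / 2) ≠ 0 →
      Real.sign (PfunR ℒ₁ (v + β / 2)) * Real.sign (PfunR ℒ₂ (v + α / 2)) =
      Real.sign (PfunR ℒ₁ (v - β / 2)) * Real.sign (PfunR ℒ₂ (v - α / 2)) := by
  intro v hv h1p h1m h2p h2m
  by_cases hβ0 : β = 0
  · -- β = 0 : ℒ₂ vanishes identically, and v + β/2 = v - β/2
    subst hβ0
    have hα : α ≠ 0 := fun h => hαβ (by rw [h])
    have hz2 : ∀ e, ℒ₂ e = 0 := by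
      by_contra hcon
      push_neg at hcon
      obtain ⟨e, he⟩ := hcon
      obtain ⟨x, y, hxy⟩ := hconf.supp2 e he
      have he' : e = ((x : ℤ) : ℝ) * α := by rw [hxy]; push_cast; ring
      have claim : ∀ t : ℕ, ℒ₂ (((x - t : ℤ) : ℝ) * α) ≠ 0 := by
        intro t
        induction t with
        | zero => push_cast; rw [sub_zero, ← he']; exact he
        | succ t ih =>
          set w : ℝ := ((x - t - 1 : ℤ) : ℝ) * α + (α + 0) / 2 with hw
          have hwv : w ∈ latV α 0 := ⟨x - t - 1, 0, by rw [hw]; push_cast; ring⟩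
          have hcs := hconf.conserv w hwv
          have e0 : w + 0 / 2 = w - 0 / 2 := by ring
          rw [e0] at hcs
          have e1 : w + α / 2 = ((x - t : ℤ) : ℝ) * α := by rw [hw]; push_cast; ring_nf
          have e2 : w - α / 2 = ((x - t - 1 : ℤ) : ℝ) * α := by rw [hw]; push_cast; ring_nf
          rw [e1, e2] at hcs
          have : ℒ₂ (((x - t - 1 : ℤ) : ℝ) * α) ≠ 0 := by omega
          have e3 : (x - (t + 1 : ℕ) : ℤ) = x - t - 1 := by push_cast; ring
          rw [e3]
          exact this
      have hinf : (Function.support ℒ₂).Infinite := by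
        apply Set.infinite_of_injective_forall_mem
          (f := fun t : ℕ => ((x - t : ℤ) : ℝ) * α)
        · intro t₁ t₂ h
          simp only [mul_eq_mul_right_iff, Int.cast_inj, or_iff_left hα] at h
          have : (x - t₁ : ℤ) = x - t₂ := by exact_mod_cast h
          omega
        · intro t; exact claim t
      exact hinf hconf.fin2
    have hP2 : ∀ u, PfunR ℒ₂ u = 1 := pfun_of_zero ℒ₂ hz2
    have e0 : v + 0 / 2 = v - 0 / 2 := by ring
    rw [e0, hP2, hP2]
  by_cases hα0 : α = 0
  · -- α = 0 : ℒ₁ vanishes identically, v + α/2 = v - α/2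
    subst hα0
    have hz1 : ∀ e, ℒ₁ e = 0 := by
      by_contra hcon
      push_neg at hcon
      obtain ⟨e, he⟩ := hcon
      obtain ⟨x, y, hxy⟩ := hconf.supp1 e he
      have he' : e = ((y : ℤ) : ℝ) * β := by rw [hxy]; push_cast; ring
      have claim : ∀ t : ℕ, ℒ₁ (((y - t : ℤ) : ℝ) * β) ≠ 0 := by
        intro t
        induction t with
        | zero => push_cast; rw [sub_zero, ← he']; exact he
        | succ t ih =>
          set w : ℝ := ((y - t - 1 : ℤ) : ℝ) * β + (0 + β) / 2 with hw
          have hwv : w ∈ latV 0 β := ⟨0, y - t - 1, by rw [hw]; push_cast; ring⟩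
          have hcs := hconf.conserv w hwv
          have e0 : w + 0 / 2 = w - 0 / 2 := by ring
          rw [e0] at hcs
          have e1 : w + β / 2 = ((y - t : ℤ) : ℝ) * β := by rw [hw]; push_cast; ring_nf
          have e2 : w - β / 2 = ((y - t - 1 : ℤ) : ℝ) * β := by rw [hw]; push_cast; ring_nf
          rw [e1, e2] at hcs
          have : ℒ₁ (((y - t - 1 : ℤ) : ℝ) * β) ≠ 0 := by omega
          have e3 : (y - (t + 1 : ℕ) : ℤ) = y - t - 1 := by push_cast; ring
          rw [e3]
          exact this
      have hinf : (Function.support ℒ₁).Infinite := by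
        apply Set.infinite_of_injective_forall_mem
          (f := fun t : ℕ => ((y - t : ℤ) : ℝ) * β)
        · intro t₁ t₂ h
          simp only [mul_eq_mul_right_iff, Int.cast_inj, or_iff_left hβ0] at h
          have : (y - t₁ : ℤ) = y - t₂ := by exact_mod_cast h
          omega
        · intro t; exact claim t
      exact hinf hconf.fin1
    have hP1 : ∀ u, PfunR ℒ₁ u = 1 := pfun_of_zero ℒ₁ hz1
    have e0 : v + 0 / 2 = v - 0 / 2 := by ring
    rw [e0, hP1, hP1]
  · -- main case : α ≠ 0 and β ≠ 0
    -- m, n ≥ 1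
    have hm : m ≠ 0 := by
      intro h; subst h
      have : (n : ℝ) * β = 0 := by simpa using hlin
      rcases mul_eq_zero.1 this with h | h
      · have : n = 0 := by exact_mod_cast h
        subst this
        simpa [Nat.coprime_zero_left] using hmn
      · exact hβ0 h
    have hn : n ≠ 0 := by
      intro h; subst h
      have : (m : ℝ) * α = 0 := by simpa using hlin
      rcases mul_eq_zero.1 this with h | h
      · have : m = 0 := by exact_mod_cast h
        subst this
        simpa [Nat.coprime_zero_right] using hmn
      · exact hα0 h
    have hmR : (m : ℝ) ≠ 0 := Nat.cast_ne_zero.2 hm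
    have hmpos : (0 : ℝ) < (m : ℝ) := by exact_mod_cast Nat.pos_of_ne_zero hm
    -- Bezout
    obtain ⟨u, w, huw⟩ : ∃ u w : ℤ, (m : ℤ) * u + (n : ℤ) * w = 1 := by
      refine ⟨Nat.gcdA m n, Nat.gcdB m n, ?_⟩
      have h := Nat.gcd_eq_gcd_ab m n
      rw [Nat.Coprime.gcd_eq_one hmn] at h
      exact_mod_cast h.symm
    -- the generator γ and the integers M, N
    obtain ⟨γ, M, N, hγ, hβγ, hαγ, hMN⟩ :
        ∃ (γ : ℝ) (M N : ℤ), 0 < γ ∧ β = (M : ℝ) * γ ∧ α = -(N : ℝ) * γ ∧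
          ∀ k : ℤ, ∃ x y : ℤ, -x * N + y * M = k := by
      rcases lt_or_gt_of_ne hβ0 with hneg | hpos
      · refine ⟨-β / m, -(m : ℤ), -(n : ℤ), div_pos (by linarith) hmpos, by push_cast; field_simp,
          ?_, ?_⟩
        · push_cast
          field_simp
          linarith [hlin]
        · intro k
          exact ⟨w * k, -(u * k), by linear_combination k * huw⟩
      · refine ⟨β / m, (m : ℤ), (n : ℤ), div_pos (by linarith) hmpos, by push_cast; field_simp,
          ?_, ?_⟩
        · push_cast
          field_simp
          linarith [hlin]
        · intro k
          exact ⟨-(w * k), u * k, by linear_combination k * huw⟩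
    have hlat : ∀ x y : ℤ, (x : ℝ) * α + (y : ℝ) * β = ((-x * N + y * M : ℤ) : ℝ) * γ := by
      intro x y
      rw [hαγ, hβγ]
      push_cast
      ring
    -- supports lie on the γ-lattices
    have hsupp1 : ∀ e : ℝ, ℒ₁ e ≠ 0 → ∃ j : ℤ, e = (j : ℝ) * γ + α / 2 := by
      intro e he
      obtain ⟨x, y, hxy⟩ := hconf.supp1 e he
      exact ⟨-x * N + y * M, by rw [hxy, ← hlat]⟩
    have hsupp2 : ∀ e : ℝ, ℒ₂ e ≠ 0 → ∃ j : ℤ, e = (j : ℝ) * γ + β / 2 := by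
      intro e he
      obtain ⟨x, y, hxy⟩ := hconf.supp2 e he
      exact ⟨-x * N + y * M, by rw [hxy, ← hlat]⟩
    -- finiteness of the ℤ-indexed supports
    have hinj1 : Function.Injective (fun j : ℤ => (j : ℝ) * γ + α / 2) := by
      intro i j h
      simp only [add_left_inj] at h
      exact_mod_cast mul_right_cancel₀ (ne_of_gt hγ) h
    have hinj2 : Function.Injective (fun j : ℤ => (j : ℝ) * γ + β / 2) := by
      intro i j h
      simp only [add_left_inj] at h
      exact_mod_cast mul_right_cancel₀ (ne_of_gt hγ) h
    have ha : (Function.support (fun j : ℤ => ℒ₁ ((j : ℝ) * γ + α / 2))).Finite := by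
      have : Function.support (fun j : ℤ => ℒ₁ ((j : ℝ) * γ + α / 2))
          = (fun j : ℤ => (j : ℝ) * γ + α / 2) ⁻¹' (Function.support ℒ₁) := rfl
      rw [this]
      exact Set.Finite.preimage (hinj1.injOn) hconf.fin1
    have hb : (Function.support (fun j : ℤ => ℒ₂ ((j : ℝ) * γ + β / 2))).Finite := by
      have : Function.support (fun j : ℤ => ℒ₂ ((j : ℝ) * γ + β / 2))
          = (fun j : ℤ => (j : ℝ) * γ + β / 2) ⁻¹' (Function.support ℒ₂) := rfl
      rw [this]
      exact Set.Finite.preimage (hinj2.injOn) hconf.fin2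
    -- conservation in ℤ coordinates
    have hconsZ : ∀ k : ℤ, ℒ₁ (((k + M : ℤ) : ℝ) * γ + α / 2)
        + ℒ₂ (((k - N : ℤ) : ℝ) * γ + β / 2)
        = ℒ₁ ((k : ℝ) * γ + α / 2) + ℒ₂ ((k : ℝ) * γ + β / 2) := by
      intro k
      obtain ⟨x, y, hxy⟩ := hMN k
      have hvk : ((k : ℝ) * γ + (α + β) / 2) ∈ latV α β := by
        refine ⟨x, y, ?_⟩
        have h := hlat x y
        rw [hxy] at h
        rw [← h]
      have hcs := hconf.conserv _ hvk
      have e1 : (k : ℝ) * γ + (α + β) / 2 + β / 2 = ((k + M : ℤ) : ℝ) * γ + α / 2 := by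
        rw [hαγ, hβγ]; push_cast; ring
      have e2 : (k : ℝ) * γ + (α + β) / 2 + α / 2 = ((k - N : ℤ) : ℝ) * γ + β / 2 := by
        rw [hαγ, hβγ]; push_cast; ring
      have e3 : (k : ℝ) * γ + (α + β) / 2 - β / 2 = (k : ℝ) * γ + α / 2 := by
        rw [hαγ, hβγ]; push_cast; ring
      have e4 : (k : ℝ) * γ + (α + β) / 2 - α / 2 = (k : ℝ) * γ + β / 2 := by
        rw [hαγ, hβγ]; push_cast; ring
      rw [e1, e2, e3, e4] at hcs
      exact hcs
    -- coordinates of v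
    obtain ⟨x, y, hxy⟩ := hv
    set k₀ : ℤ := -x * N + y * M with hk₀
    have hvγ : v = (k₀ : ℝ) * γ + (α + β) / 2 := by
      rw [hxy, hlat x y]
    have hv1 : v + β / 2 = ((k₀ + M : ℤ) : ℝ) * γ + α / 2 := by
      rw [hvγ, hαγ, hβγ]; push_cast; ring
    have hv2 : v - β / 2 = ((k₀ : ℤ) : ℝ) * γ + α / 2 := by
      rw [hvγ, hαγ, hβγ]; push_cast; ring
    have hv3 : v + α / 2 = ((k₀ - N : ℤ) : ℝ) * γ + β / 2 := by
      rw [hvγ, hαγ, hβγ]; push_cast; ring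
    have hv4 : v - α / 2 = ((k₀ : ℤ) : ℝ) * γ + β / 2 := by
      rw [hvγ, hαγ, hβγ]; push_cast; ring
    have E1 := sign_eq_latt γ (α / 2) hγ ℒ₁ hconf.fin1 hsupp1 ha (k₀ + M) _ hv1 h1p
    have E2 := sign_eq_latt γ (α / 2) hγ ℒ₁ hconf.fin1 hsupp1 ha k₀ _ hv2 h1m
    have E3 := sign_eq_latt γ (β / 2) hγ ℒ₂ hconf.fin2 hsupp2 hb (k₀ - N) _ hv3 h2p
    have E4 := sign_eq_latt γ (β / 2) hγ ℒ₂ hconf.fin2 hsupp2 hb k₀ _ hv4 h2m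
    rw [E1, E2, E3, E4, ← pow_add, ← pow_add]
    congr 1
    exact key_tel _ _ ha hb M N hconsZ k₀

end
end

section
/- Let (q₁,q₂), qᵢ: Eᵢ → ℂ, be any pair of functions satisfying the Mazorchuk–Turowska equation q₁(u+β/2)q₂(u+α/2) = q₁(u−β/2)q₂(u−α/2) for all u ∈ V. Define linear operators on the space of all functions f: ℤ² → ℂ by (X₁^± f)(x,y) = q₁(xα+yβ ∓ α/2)·f(x∓1, y) and (X₂^± f)(x,y) = q₂(xα+yβ ∓ β/2)·f(x, y∓1). Then X₁^+ ∘ X₂^− = X₂^− ∘ X₁^+ and X₁^− ∘ X₂^+ = X₂^+ ∘ X₁^−. -/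
open Complex

noncomputable section
open scoped Classical

/-- The difference operator `X̃₁^s` (`s = 1` for `+`, `s = -1` for `−`):
`(X̃₁^s f)(x,y) = q₁(xα+yβ − s·α/2)·f(x−s, y)`. -/
def opX1 (q : ℝ → ℂ) (α β : ℝ) (s : ℤ) (f : ℤ × ℤ → ℂ) : ℤ × ℤ → ℂ :=
  fun p => q (p.1 * α + p.2 * β - s * (α / 2)) * f (p.1 - s, p.2)

/-- The difference operator `X̃₂^s`:
`(X̃₂^s f)(x,y) = q₂(xα+yβ − s·β/2)·f(x, y−s)`. -/
def opX2 (q : ℝ → ℂ) (α β : ℝ) (s : ℤ) (f : ℤ × ℤ → ℂ) : ℤ × ℤ → ℂ :=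
  fun p => q (p.1 * α + p.2 * β - s * (β / 2)) * f (p.1, p.2 - s)

/-- The multiplication operator `(H̃ f)(x,y) = (xα+yβ)·f(x,y)`. -/
def opH (α β : ℝ) (f : ℤ × ℤ → ℂ) : ℤ × ℤ → ℂ :=
  fun p => ((p.1 * α + p.2 * β : ℝ) : ℂ) * f p

/-- If `(q₁,q₂)` satisfies the Mazorchuk–Turowska equation on `V`, then the difference
operators satisfy `X₁⁺∘X₂⁻ = X₂⁻∘X₁⁺` and `X₁⁻∘X₂⁺ = X₂⁺∘X₁⁻`. -/
theorem stmt10 (m n : ℕ) (hmn : Nat.Coprime m n) (α β : ℝ)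
    (hαβ : (α, β) ≠ ((0 : ℝ), (0 : ℝ))) (hlin : (m : ℝ) * α + (n : ℝ) * β = 0)
    (q₁ q₂ : ℝ → ℂ)
    (hq : ∀ u ∈ latV α β,
      q₁ (u + β / 2) * q₂ (u + α / 2) = q₁ (u - β / 2) * q₂ (u - α / 2)) :
    (∀ f : ℤ × ℤ → ℂ,
      opX1 q₁ α β 1 (opX2 q₂ α β (-1) f) = opX2 q₂ α β (-1) (opX1 q₁ α β 1 f)) ∧
    (∀ f : ℤ × ℤ → ℂ,
      opX1 q₁ α β (-1) (opX2 q₂ α β 1 f) = opX2 q₂ α β 1 (opX1 q₁ α β (-1) f)) := by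
  constructor
  · intro f
    funext p
    obtain ⟨x, y⟩ := p
    have h := hq ((x : ℝ) * α + y * β + β / 2 - α / 2)
      ⟨x - 1, y, by push_cast; ring⟩
    simp only [opX1, opX2]
    push_cast
    ring_nf
    ring_nf at h
    linear_combination (-1 : ℂ) * f (-1 + x, 1 + y) * h
  · intro f
    funext p
    obtain ⟨x, y⟩ := p
    have h := hq ((x : ℝ) * α + y * β + α / 2 - β / 2)
      ⟨x, y - 1, by push_cast; ring⟩
    simp only [opX1, opX2]
    push_cast
    ring_nf
    ring_nf at h
    linear_combination f (1 + x, -1 + y) * h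

end
end

section
/- There exists a unique function w: F → {1, −1} such that w(0) = 1 and, for all λ ∈ F, w(λ+α) = (−1)^{l₁(λ+α/2)}·w(λ) and w(λ+β) = (−1)^{l₂(λ+β/2)}·w(λ). -/
open Complex

noncomputable section
open scoped Classical

def eps (z : ZMod 2) : ℝ := if z = 0 then 1 else -1

lemma zmod2_cases : ∀ a : ZMod 2, a = 0 ∨ a = 1 := by decide

lemma two_zmod2 : (1 + 1 : ZMod 2) = 0 := by decide

lemma eps_add (a b : ZMod 2) : eps (a + b) = eps a * eps b := by
  rcases zmod2_cases a with ha | ha <;> rcases zmod2_cases b with hb | hb <;>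
    subst ha <;> subst hb <;> simp [eps, two_zmod2]

lemma eps_sq (a : ZMod 2) : eps a * eps a = 1 := by
  rcases zmod2_cases a with ha | ha <;> subst ha <;> norm_num [eps]

lemma eps_pm (a : ZMod 2) : eps a = 1 ∨ eps a = -1 := by
  rcases zmod2_cases a with ha | ha <;> subst ha <;> norm_num [eps]

lemma eps_natCast (L : ℕ) : (-1 : ℝ) ^ L = eps (L : ZMod 2) := by
  induction L with
  | zero => norm_num [eps]
  | succ L ih =>
      have h : ((L+1 : ℕ) : ZMod 2) = (L : ZMod 2) + 1 := by push_cast; ring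
      rw [pow_succ, ih, h, eps_add]
      have : eps 1 = -1 := by norm_num [eps]
      rw [this]

lemma zmod2_add_self (a : ZMod 2) : a + a = 0 := by
  rcases zmod2_cases a with ha | ha <;> subst ha <;> decide

lemma const_eventually_zero {A : Type*} [Zero A] (f : ℤ → A) (d : ℕ) (hd : 0 < d)
    (hstep : ∀ k, f k = f (k + d)) (N : ℤ) (h0 : ∀ k, N ≤ k → f k = 0) : ∀ k, f k = 0 := by
  intro k
  have key : ∀ s : ℕ, f k = f (k + s * d) := by
    intro s
    induction s with
    | zero => simp
    | succ s ih =>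
        rw [ih, hstep (k + s * d)]
        congr 1
        push_cast
        ring
  rcases le_or_gt N k with h | h
  · exact h0 k h
  · have hd' : (1:ℤ) ≤ (d:ℤ) := by exact_mod_cast hd
    have h1 : ((N - k).toNat : ℤ) = N - k := Int.toNat_of_nonneg (by omega)
    have hs : N ≤ k + ((N - k).toNat : ℤ) * d := by nlinarith
    rw [key (N - k).toNat]
    exact h0 _ hs

def tl (f : ℤ → ZMod 2) (d : ℕ) (N k : ℤ) : ZMod 2 :=
  ∑ j ∈ Finset.Icc (k+1) N, if (d : ℤ) ∣ (j - (k+1)) then f j else 0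

lemma tl_zero (f : ℤ → ZMod 2) (d : ℕ) (N k : ℤ) (hk : N ≤ k) : tl f d N k = 0 := by
  unfold tl
  rw [Finset.Icc_eq_empty (by omega)]
  simp

lemma tl_rec (f : ℤ → ZMod 2) (d : ℕ) (N : ℤ) (hd : 0 < d) (hf : ∀ j, N < j → f j = 0)
    (k : ℤ) : tl f d N k = f (k+1) + tl f d N (k + d) := by
  have hd' : (1:ℤ) ≤ (d:ℤ) := by exact_mod_cast hd
  rcases le_or_gt N k with hk | hk
  · rw [tl_zero _ _ _ _ hk, tl_zero _ _ _ _ (by omega), hf (k+1) (by omega)]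
    simp
  · unfold tl
    have hins : Finset.Icc (k+1) N = insert (k+1) (Finset.Icc (k+2) N) := by
      apply Finset.ext
      intro j
      simp only [Finset.mem_Icc, Finset.mem_insert]
      omega
    rw [hins, Finset.sum_insert (by simp)]
    simp only [sub_self, dvd_zero, if_pos]
    congr 1
    rw [Finset.sum_subset (Finset.Icc_subset_Icc_left (show (k:ℤ)+2 ≤ k+(d:ℤ)+1 by omega))]
    · apply Finset.sum_congr rfl
      intro j _
      congr 1
      have he : j - (k+1) = (j - (k + (d:ℤ) + 1)) + d := by ring
      rw [he]
      exact propext dvd_add_self_right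
    · intro j hj hj2
      simp only [Finset.mem_Icc] at hj hj2
      have hjr : k + 2 ≤ j ∧ j ≤ k + d := by omega
      rw [if_neg]
      rintro ⟨c, hc⟩
      have hb1 : (d:ℤ) * c ≤ -1 := by linarith [hjr.2, hc]
      have hb2 : 1 - (d:ℤ) ≤ (d:ℤ) * c := by linarith [hjr.1, hc]
      have hcneg : c ≤ -1 := by nlinarith
      nlinarith

lemma tl_window (f : ℤ → ZMod 2) (d : ℕ) (N : ℤ) (hd : 0 < d) (k : ℤ) :
    ∑ t ∈ Finset.range d, tl f d N (k + t) = ∑ j ∈ Finset.Icc (k+1) N, f j := by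
  have hd' : (1:ℤ) ≤ (d:ℤ) := by exact_mod_cast hd
  unfold tl
  have hext : ∀ t ∈ Finset.range d,
      ∑ j ∈ Finset.Icc (k + (t:ℤ) + 1) N, (if (d:ℤ) ∣ (j - (k + (t:ℤ) + 1)) then f j else 0)
      = ∑ j ∈ Finset.Icc (k+1) N, (if (d:ℤ) ∣ (j - (k + (t:ℤ) + 1)) then f j else 0) := by
    intro t ht
    simp only [Finset.mem_range] at ht
    rw [Finset.sum_subset (Finset.Icc_subset_Icc_left (show (k:ℤ)+1 ≤ k+(t:ℤ)+1 by omega))]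
    intro j hj hj2
    simp only [Finset.mem_Icc] at hj hj2
    rw [if_neg]
    rintro ⟨c, hc⟩
    have ht' : (t:ℤ) ≤ (d:ℤ) - 1 := by omega
    have hb1 : (d:ℤ) * c ≤ -1 := by omega
    have hb2 : -(d:ℤ) < (d:ℤ) * c := by omega
    have hcneg : c ≤ -1 := by nlinarith
    nlinarith
  rw [Finset.sum_congr rfl hext, Finset.sum_comm]
  apply Finset.sum_congr rfl
  intro j hj
  simp only [Finset.mem_Icc] at hj
  set t₀ : ℕ := ((j - (k+1)) % d).toNat with ht₀
  have hmod1 : 0 ≤ (j - (k+1)) % d := Int.emod_nonneg _ (by omega)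
  have hmod2 : (j - (k+1)) % d < d := Int.emod_lt_of_pos _ (by omega)
  have ht₀' : (t₀ : ℤ) = (j - (k+1)) % d := Int.toNat_of_nonneg hmod1
  have ht₀mem : t₀ ∈ Finset.range d := by
    simp only [Finset.mem_range]
    omega
  rw [Finset.sum_eq_single_of_mem t₀ ht₀mem]
  · rw [if_pos]
    have : j - (k + (t₀:ℤ) + 1) = (j - (k+1)) - (j - (k+1)) % d := by omega
    rw [this, Int.emod_def]
    exact ⟨(j - (k+1)) / d, by ring⟩
  · intro t ht hne
    simp only [Finset.mem_range] at ht
    rw [if_neg]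
    rintro ⟨c, hc⟩
    -- d ∣ j - (k+t+1) and j-(k+1) ≡ t₀, so d ∣ t - t₀, |t - t₀| < d, t ≠ t₀
    have h1 : j - (k+1) = (t:ℤ) + (d:ℤ) * c := by omega
    have h2 : (j - (k+1)) % d = (t:ℤ) % d := by
      rw [h1]
      apply Int.add_mul_emod_self_left
    have h3 : (t:ℤ) % d = t := Int.emod_eq_of_lt (by positivity) (by exact_mod_cast ht)
    have : (t₀:ℤ) = t := by omega
    exact hne (by exact_mod_cast this.symm)


def psum (f : ℤ → ZMod 2) (k : ℤ) : ZMod 2 :=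
  (∑ j ∈ Finset.Ico 0 k, f j) + (∑ j ∈ Finset.Ico k 0, f j)

lemma zmod2_add_self' (a : ZMod 2) : a + a = 0 := by
  have : ∀ a : ZMod 2, a + a = 0 := by decide
  exact this a

lemma psum_zero (f : ℤ → ZMod 2) : psum f 0 = 0 := by simp [psum]

lemma psum_succ (f : ℤ → ZMod 2) (k : ℤ) : psum f (k+1) = psum f k + f k := by
  rcases le_or_gt 0 k with h | h
  · have h1 : Finset.Ico (k+1) 0 = ∅ := Finset.Ico_eq_empty (by omega)
    have h2 : Finset.Ico k 0 = ∅ := Finset.Ico_eq_empty (by omega)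
    have h3 : Finset.Ico 0 (k+1) = insert k (Finset.Ico 0 k) := by
      apply Finset.ext; intro j; simp only [Finset.mem_Ico, Finset.mem_insert]; omega
    simp only [psum, h1, h2, h3, Finset.sum_empty, add_zero]
    rw [Finset.sum_insert (by simp), add_comm]
  · have h1 : Finset.Ico 0 (k+1) = ∅ := Finset.Ico_eq_empty (by omega)
    have h2 : Finset.Ico 0 k = ∅ := Finset.Ico_eq_empty (by omega)
    have h3 : Finset.Ico k 0 = insert k (Finset.Ico (k+1) 0) := by
      apply Finset.ext; intro j; simp only [Finset.mem_Ico, Finset.mem_insert]; omega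
    simp only [psum, h1, h2, h3, Finset.sum_empty, zero_add]
    rw [Finset.sum_insert (by simp)]
    rw [add_comm (f k) _, add_assoc, zmod2_add_self', add_zero]

lemma psum_shift (f : ℤ → ZMod 2) (k : ℤ) (c : ℕ) :
    psum f (k + c) = psum f k + ∑ t ∈ Finset.range c, f (k + t) := by
  induction c with
  | zero => simp
  | succ c ih =>
      have : k + ((c+1 : ℕ) : ℤ) = (k + c) + 1 := by push_cast; ring
      rw [this, psum_succ, ih, Finset.sum_range_succ, add_assoc]

lemma exists_bound (ℒ : ℝ → ℕ) (hfin : (Function.support ℒ).Finite) (γ c : ℝ) (hγ : γ ≠ 0) :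
    ∃ N : ℤ, ∀ j : ℤ, N < j → ℒ ((j:ℝ) * γ + c) = 0 := by
  have hinj : Function.Injective (fun j : ℤ => (j:ℝ) * γ + c) := by
    intro a b hab
    simp only at hab
    have : (a:ℝ) = b := mul_right_cancel₀ hγ (by linarith)
    exact_mod_cast this
  have hfin2 : {j : ℤ | ℒ ((j:ℝ) * γ + c) ≠ 0}.Finite := by
    apply Set.Finite.preimage (Set.injOn_of_injective hinj) hfin
  rcases hfin2.bddAbove with ⟨N, hN⟩
  refine ⟨N, fun j hj => ?_⟩
  by_contra h
  exact absurd (hN h) (by omega)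

lemma lfun_eq_sum (ℒ : ℝ → ℕ) (γ c : ℝ) (hγ : 0 < γ)
    (hsupp : ∀ u, ℒ u ≠ 0 → ∃ j : ℤ, u = (j:ℝ) * γ + c)
    (N : ℤ) (hN : ∀ j : ℤ, N < j → ℒ ((j:ℝ) * γ + c) = 0) (k : ℤ) :
    lfun ℒ ((k:ℝ) * γ + c) = ∑ j ∈ Finset.Icc (k+1) N, ℒ ((j:ℝ) * γ + c) := by
  have hinj : Function.Injective (fun j : ℤ => (j:ℝ) * γ + c) := by
    intro a b hab
    simp only at hab
    have : (a:ℝ) = b := by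
      have := mul_right_cancel₀ (ne_of_gt hγ) (by linarith : (a:ℝ) * γ = (b:ℝ) * γ)
      exact this
    exact_mod_cast this
  set s : Finset ℝ := (Finset.Icc (k+1) N).image (fun j : ℤ => (j:ℝ) * γ + c) with hs
  have hsub : Function.support (fun e : ℝ => if (k:ℝ) * γ + c < e then ℒ e else 0) ⊆ ↑s := by
    intro e he
    simp only [Function.mem_support, ne_eq, ite_eq_right_iff, not_forall] at he
    rcases he with ⟨hlt, hne⟩
    rcases hsupp e hne with ⟨j, rfl⟩
    have hjk : k < j := by
      have : (k:ℝ) * γ < (j:ℝ) * γ := by linarith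
      have : (k:ℝ) < j := lt_of_mul_lt_mul_right this (le_of_lt hγ)
      exact_mod_cast this
    have hjN : j ≤ N := by
      by_contra hcon
      exact hne (hN j (by omega))
    simp only [hs, Finset.coe_image, Set.mem_image, Finset.mem_coe, Finset.mem_Icc]
    exact ⟨j, ⟨by omega, hjN⟩, rfl⟩
  rw [lfun, finsum_eq_sum_of_support_subset _ hsub, Finset.sum_image (fun a _ b _ h => hinj h)]
  apply Finset.sum_congr rfl
  intro j hj
  simp only [Finset.mem_Icc] at hj
  rw [if_pos]
  have : (k:ℝ) < j := by exact_mod_cast (by omega : k < j)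
  nlinarith

def Concl (α β : ℝ) (ℒ₁ ℒ₂ : ℝ → ℕ) : Prop :=
  ∃ w : ℝ → ℝ,
    ((∀ lam ∈ latF α β, w lam = 1 ∨ w lam = -1) ∧ w 0 = 1 ∧
      (∀ lam ∈ latF α β,
        w (lam + α) = (-1 : ℝ) ^ lfun ℒ₁ (lam + α / 2) * w lam ∧
        w (lam + β) = (-1 : ℝ) ^ lfun ℒ₂ (lam + β / 2) * w lam)) ∧
    ∀ w' : ℝ → ℝ,
      ((∀ lam ∈ latF α β, w' lam = 1 ∨ w' lam = -1) ∧ w' 0 = 1 ∧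
        (∀ lam ∈ latF α β,
          w' (lam + α) = (-1 : ℝ) ^ lfun ℒ₁ (lam + α / 2) * w' lam ∧
          w' (lam + β) = (-1 : ℝ) ^ lfun ℒ₂ (lam + β / 2) * w' lam)) →
      ∀ lam ∈ latF α β, w' lam = w lam

lemma zmod2_eq_of_add_eq_zero (a b : ZMod 2) (h : a + b = 0) : a = b := by
  revert h; revert a b; decide

lemma zmod2_swap (a b x : ZMod 2) (h : a = b + x) : b = a + x := by
  rw [h, add_assoc, zmod2_add_self, add_zero]

lemma zmod2_finisher (a b c d : ZMod 2) (h : a + b = c + d) : d + b + (a + c) = 0 := by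
  revert h; revert a b c d; decide

lemma tl_diff (f : ℤ → ZMod 2) (d : ℕ) (N : ℤ) (hd : 0 < d) (hf : ∀ j, N < j → f j = 0)
    (k : ℤ) : tl f d N k + tl f d N (k + d) = f (k+1) := by
  rw [tl_rec f d N hd hf k, add_assoc, zmod2_add_self, add_zero]

lemma neg_one_pow_sq_mul (L : ℕ) (a b : ℝ) :
    ((-1:ℝ)^L * a) * ((-1:ℝ)^L * b) = a * b := by
  have hpow : (-1:ℝ)^L * (-1:ℝ)^L = 1 := by rw [← mul_pow]; norm_num
  calc ((-1:ℝ)^L * a) * ((-1:ℝ)^L * b) = ((-1:ℝ)^L * (-1:ℝ)^L) * (a * b) := by ring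
    _ = a * b := by rw [hpow, one_mul]

theorem core (m n : ℕ) (hm : 0 < m) (hn : 0 < n) (hmn : Nat.Coprime m n)
    (γ : ℝ) (hγ : 0 < γ) (α β : ℝ) (hα : α = (n:ℝ) * γ) (hβ : β = -((m:ℝ) * γ))
    (ℒ₁ ℒ₂ : ℝ → ℕ) (hconf : Config α β ℒ₁ ℒ₂) : Concl α β ℒ₁ ℒ₂ := by
  -- Bezout
  obtain ⟨u, v, huv⟩ : IsCoprime (m : ℤ) (n : ℤ) := Int.isCoprime_iff_gcd_eq_one.mpr (by simpa using hmn)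
  set p : ℤ := v with hp
  set q : ℤ := -u with hq
  have hpq : p * n - q * m = 1 := by rw [hp, hq]; linarith [huv]
  -- natural Bezout
  obtain ⟨p', q', hpq'⟩ : ∃ p' q' : ℕ, p' * n = q' * m + 1 := by
    set t : ℤ := p.natAbs + q.natAbs with ht
    have hm1 : (1:ℤ) ≤ (m:ℤ) := by exact_mod_cast hm
    have hn1 : (1:ℤ) ≤ (n:ℤ) := by exact_mod_cast hn
    have ht0 : 0 ≤ t := by positivity
    have h1 : 0 ≤ p + t * m := by
      have htm : t ≤ t * m := le_mul_of_one_le_right ht0 hm1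
      omega
    have h2 : 0 ≤ q + t * n := by
      have htn : t ≤ t * n := le_mul_of_one_le_right ht0 hn1
      omega
    refine ⟨(p + t * m).toNat, (q + t * n).toNat, ?_⟩
    have e1 : ((p + t * m).toNat : ℤ) = p + t * m := Int.toNat_of_nonneg h1
    have e2 : ((q + t * n).toNat : ℤ) = q + t * n := Int.toNat_of_nonneg h2
    have : ((p + t * m).toNat : ℤ) * n = ((q + t * n).toNat : ℤ) * m + 1 := by
      rw [e1, e2]; linear_combination hpq
    exact_mod_cast this
  -- lattice characterizations
  have hcomb : ∀ x y : ℤ, (x:ℝ) * α + (y:ℝ) * β = ((x * n - y * m : ℤ) : ℝ) * γ := by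
    intro x y; rw [hα, hβ]; push_cast; ring
  have hFiff : ∀ lam : ℝ, lam ∈ latF α β ↔ ∃ k : ℤ, lam = (k:ℝ) * γ := by
    intro lam
    constructor
    · rintro ⟨x, y, rfl⟩
      exact ⟨x * n - y * m, (hcomb x y).symm ▸ rfl⟩
    · rintro ⟨k, rfl⟩
      refine ⟨k * p, k * q, ?_⟩
      rw [hcomb (k*p) (k*q)]
      congr 1
      have e : k * p * n - k * q * m = k * (p * n - q * m) := by ring
      rw [e, hpq, mul_one]
  -- bounds
  obtain ⟨N₁, hN₁⟩ := exists_bound ℒ₁ hconf.fin1 γ (α/2) (ne_of_gt hγ)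
  obtain ⟨N₂, hN₂⟩ := exists_bound ℒ₂ hconf.fin2 γ (β/2) (ne_of_gt hγ)
  set N : ℤ := max N₁ N₂ with hNdef
  set fa : ℤ → ℕ := fun j => ℒ₁ ((j:ℝ) * γ + α/2) with hfa
  set fb : ℤ → ℕ := fun j => ℒ₂ ((j:ℝ) * γ + β/2) with hfb
  have hfaN : ∀ j : ℤ, N < j → fa j = 0 := fun j hj => hN₁ j (by omega)
  have hfbN : ∀ j : ℤ, N < j → fb j = 0 := fun j hj => hN₂ j (by omega)
  set fa2 : ℤ → ZMod 2 := fun j => ((fa j : ZMod 2)) with hfa2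
  set fb2 : ℤ → ZMod 2 := fun j => ((fb j : ZMod 2)) with hfb2
  have hfa2N : ∀ j : ℤ, N < j → fa2 j = 0 := fun j hj => by simp [hfa2, hfaN j hj]
  have hfb2N : ∀ j : ℤ, N < j → fb2 j = 0 := fun j hj => by simp [hfb2, hfbN j hj]
  -- conservation in coordinates
  have hD : ∀ r : ℤ, fa r + fb (r + m + n) = fa (r + m) + fb (r + m) := by
    intro r
    have hv : ((r + m : ℤ):ℝ) * γ + (α + β)/2 ∈ latV α β := by
      refine ⟨(r+m) * p, (r+m) * q, ?_⟩
      rw [hcomb ((r+m)*p) ((r+m)*q)]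
      congr 2
      have e : (r+m) * p * n - (r+m) * q * m = (r+m) * (p * n - q * m) := by ring
      rw [e, hpq, mul_one]
    have hc := hconf.conserv _ hv
    have e1 : ((r + m : ℤ):ℝ) * γ + (α + β)/2 + β/2 = (r:ℝ) * γ + α/2 := by
      rw [hβ]; push_cast; ring
    have e2 : ((r + m : ℤ):ℝ) * γ + (α + β)/2 + α/2 = ((r + m + n : ℤ):ℝ) * γ + β/2 := by
      rw [hα, hβ]; push_cast; ring
    have e3 : ((r + m : ℤ):ℝ) * γ + (α + β)/2 - β/2 = ((r + m : ℤ):ℝ) * γ + α/2 := by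
      push_cast; ring
    have e4 : ((r + m : ℤ):ℝ) * γ + (α + β)/2 - α/2 = ((r + m : ℤ):ℝ) * γ + β/2 := by
      push_cast; ring
    rw [e1, e2, e3, e4] at hc
    simpa [hfa, hfb] using hc
  have hD2 : ∀ r : ℤ, fa2 r + fb2 (r + m + n) = fa2 (r + m) + fb2 (r + m) := by
    intro r
    simp only [hfa2, hfb2]
    exact_mod_cast congrArg (Nat.cast : ℕ → ZMod 2) (hD r)
  -- the step functions
  set φ : ℤ → ZMod 2 := fun k => tl fa2 n N k with hφ
  set φ₂ : ℤ → ZMod 2 := fun k => tl fb2 m N (k + m) with hφ₂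
  have hφdiff : ∀ k : ℤ, φ k + φ (k + n) = fa2 (k+1) := fun k => tl_diff fa2 n N hn hfa2N k
  have hφ₂diff : ∀ k : ℤ, φ₂ k + φ₂ (k + m) = fb2 (k + m + 1) := by
    intro k
    have h := tl_diff fb2 m N hm hfb2N (k + m)
    simp only [hφ₂]
    exact h
  -- F k := φ₂ k + φ₂ (k+n) + fa2 (k+1) is m-periodic and eventually 0, hence 0
  set F : ℤ → ZMod 2 := fun k => φ₂ k + φ₂ (k + n) + fa2 (k + 1) with hF
  have hFzero : ∀ k, F k = 0 := by
    apply const_eventually_zero F m hm _ N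
    · intro k hk
      show φ₂ k + φ₂ (k + n) + fa2 (k + 1) = 0
      simp only [hφ₂]
      rw [tl_zero fb2 m N (k + m) (by omega), tl_zero fb2 m N (k + n + m) (by omega),
        hfa2N (k+1) (by omega)]
      simp
    · intro k
      apply zmod2_eq_of_add_eq_zero
      have r1 : φ₂ k + φ₂ (k + m) = fb2 (k + m + 1) := hφ₂diff k
      have r2 := hφ₂diff (k + n)
      rw [show k + (n:ℤ) + m = k + m + n by ring] at r2
      have r3 := hD2 (k + 1)
      rw [show k + 1 + (m:ℤ) + n = k + m + n + 1 by ring, show k + 1 + (m:ℤ) = k + m + 1 by ring] at r3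
      show (φ₂ k + φ₂ (k + n) + fa2 (k + 1)) + (φ₂ (k+m) + φ₂ (k+m+n) + fa2 (k+m+1)) = 0
      have regroup : (φ₂ k + φ₂ (k + n) + fa2 (k + 1)) + (φ₂ (k+m) + φ₂ (k+m+n) + fa2 (k+m+1))
          = (φ₂ k + φ₂ (k + m)) + ((φ₂ (k+n) + φ₂ (k+m+n)) + (fa2 (k+1) + fa2 (k+m+1))) := by
        abel
      rw [regroup, r1, r2]
      -- goal : fb2 (k+m+1) + (fb2 (k+m+n+1) + (fa2 (k+1) + fa2 (k+m+1))) = 0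
      have fin := zmod2_finisher _ _ _ _ r3
      -- fin : fb2 (k+m+1) + fb2 (k+m+n+1) + (fa2 (k+1) + fa2 (k+m+1)) = 0
      rw [← fin]
      abel
  have hφ₂n : ∀ k : ℤ, φ₂ k + φ₂ (k + n) = fa2 (k + 1) := by
    intro k
    apply zmod2_eq_of_add_eq_zero
    show (φ₂ k + φ₂ (k + n)) + fa2 (k + 1) = 0
    exact hFzero k
  -- φ = φ₂
  set χ : ℤ → ZMod 2 := fun k => φ k + φ₂ k with hχdef
  have hχ : ∀ k, χ k = 0 := by
    apply const_eventually_zero χ n hn _ N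
    · intro k hk
      show φ k + φ₂ k = 0
      simp only [hφ, hφ₂]
      rw [tl_zero fa2 n N k (by omega), tl_zero fb2 m N (k+m) (by omega), add_zero]
    · intro k
      apply zmod2_eq_of_add_eq_zero
      show (φ k + φ₂ k) + (φ (k+n) + φ₂ (k+n)) = 0
      have regroup : (φ k + φ₂ k) + (φ (k+n) + φ₂ (k+n))
          = (φ k + φ (k+n)) + (φ₂ k + φ₂ (k+n)) := by abel
      rw [regroup, hφdiff k, hφ₂n k, zmod2_add_self]
  have hφeq : ∀ k, φ k = φ₂ k := fun k => zmod2_eq_of_add_eq_zero _ _ (hχ k)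
  -- support characterization for lfun computation
  have hsupp1 : ∀ u, ℒ₁ u ≠ 0 → ∃ j : ℤ, u = (j:ℝ) * γ + α/2 := by
    intro u hu
    obtain ⟨x, y, rfl⟩ := hconf.supp1 u hu
    exact ⟨x * n - y * m, by rw [← hcomb x y]⟩
  have hsupp2 : ∀ u, ℒ₂ u ≠ 0 → ∃ j : ℤ, u = (j:ℝ) * γ + β/2 := by
    intro u hu
    obtain ⟨x, y, rfl⟩ := hconf.supp2 u hu
    exact ⟨x * n - y * m, by rw [← hcomb x y]⟩
  -- window sums
  have hw1 : ∀ k : ℤ, ∑ t ∈ Finset.range n, φ (k + t)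
      = ((lfun ℒ₁ ((k:ℝ) * γ + α/2) : ℕ) : ZMod 2) := by
    intro k
    rw [lfun_eq_sum ℒ₁ γ (α/2) hγ hsupp1 N hfaN k]
    push_cast
    exact tl_window fa2 n N hn k
  have hw2 : ∀ k : ℤ, ∑ t ∈ Finset.range m, φ (k + t)
      = ((lfun ℒ₂ (((k + m : ℤ):ℝ) * γ + β/2) : ℕ) : ZMod 2) := by
    intro k
    rw [lfun_eq_sum ℒ₂ γ (β/2) hγ hsupp2 N hfbN (k + m)]
    push_cast
    have step1 : ∀ t ∈ Finset.range m, φ (k + t) = tl fb2 m N ((k + m) + t) := by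
      intro t ht
      rw [hφeq (k + t)]
      show tl fb2 m N ((k + t) + m) = tl fb2 m N ((k + m) + t)
      rw [show (k + t) + (m:ℤ) = (k + m) + t by ring]
    rw [Finset.sum_congr rfl step1]
    exact tl_window fb2 m N hm (k + m)
  -- the weight function
  set Φf : ℤ → ZMod 2 := fun k => psum φ k with hΦf
  set w : ℝ → ℝ := fun x => eps (Φf ⌊x / γ⌋) with hwdef
  have hwk : ∀ k : ℤ, w ((k:ℝ) * γ) = eps (Φf k) := by
    intro k
    show eps (Φf ⌊((k:ℝ) * γ) / γ⌋) = eps (Φf k)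
    rw [mul_div_cancel_right₀ _ (ne_of_gt hγ), Int.floor_intCast]
  have hw0 : w 0 = 1 := by
    have h0 : ((0:ℤ):ℝ) * γ = 0 := by push_cast; ring
    rw [← h0, hwk 0]
    show eps (psum φ 0) = 1
    rw [psum_zero]
    norm_num [eps]
  have hwpm : ∀ x : ℝ, w x = 1 ∨ w x = -1 := fun x => eps_pm _
  -- the two relations
  have hrelα : ∀ k : ℤ, w ((k:ℝ) * γ + α)
      = (-1:ℝ) ^ (lfun ℒ₁ ((k:ℝ) * γ + α/2)) * w ((k:ℝ) * γ) := by
    intro k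
    have e : (k:ℝ) * γ + α = ((k + n : ℤ):ℝ) * γ := by rw [hα]; push_cast; ring
    rw [e, hwk (k + n), hwk k]
    have hshift : Φf (k + n) = Φf k + ∑ t ∈ Finset.range n, φ (k + t) := psum_shift φ k n
    rw [hshift, hw1 k, eps_natCast, eps_add, mul_comm (eps (Φf k)) _]
  have hrelβ : ∀ k : ℤ, w ((k:ℝ) * γ + β)
      = (-1:ℝ) ^ (lfun ℒ₂ ((k:ℝ) * γ + β/2)) * w ((k:ℝ) * γ) := by
    intro k
    have e : (k:ℝ) * γ + β = ((k - m : ℤ):ℝ) * γ := by rw [hβ]; push_cast; ring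
    rw [e, hwk (k - m), hwk k]
    have hshift : Φf ((k - m) + m) = Φf (k - m) + ∑ t ∈ Finset.range m, φ ((k - m) + t) :=
      psum_shift φ (k - m) m
    rw [show (k - m : ℤ) + m = k by ring] at hshift
    have hsum := hw2 (k - m)
    rw [show (k - m : ℤ) + m = k by ring] at hsum
    rw [hsum] at hshift
    have hswap := zmod2_swap _ _ _ hshift
    rw [hswap, eps_add, eps_natCast, mul_comm (eps (Φf k)) _]
  -- conclusion
  refine ⟨w, ⟨fun lam _ => hwpm lam, hw0, ?_⟩, ?_⟩
  · intro lam hlam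
    obtain ⟨k, rfl⟩ := (hFiff lam).mp hlam
    exact ⟨hrelα k, hrelβ k⟩
  · -- uniqueness
    rintro w' ⟨hw'pm, hw'0, hw'rel⟩ lam hlam
    obtain ⟨k, rfl⟩ := (hFiff lam).mp hlam
    have memα : ∀ lam : ℝ, lam ∈ latF α β → lam + α ∈ latF α β := by
      rintro _ ⟨x, y, rfl⟩
      exact ⟨x + 1, y, by push_cast; ring⟩
    have memβ : ∀ lam : ℝ, lam ∈ latF α β → lam + β ∈ latF α β := by
      rintro _ ⟨x, y, rfl⟩
      exact ⟨x, y + 1, by push_cast; ring⟩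
    have hwrel : ∀ lam ∈ latF α β,
        w (lam + α) = (-1 : ℝ) ^ lfun ℒ₁ (lam + α / 2) * w lam ∧
        w (lam + β) = (-1 : ℝ) ^ lfun ℒ₂ (lam + β / 2) * w lam := by
      intro lam hlam
      obtain ⟨k', rfl⟩ := (hFiff lam).mp hlam
      exact ⟨hrelα k', hrelβ k'⟩
    have memxα : ∀ (x : ℕ) (lam : ℝ), lam ∈ latF α β → lam + (x:ℝ) * α ∈ latF α β := by
      rintro x _ ⟨a, b, rfl⟩
      exact ⟨a + x, b, by push_cast; ring⟩
    have pairA : ∀ (x : ℕ) (lam : ℝ), lam ∈ latF α β →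
        w' (lam + (x:ℝ) * α) * w (lam + (x:ℝ) * α) = w' lam * w lam := by
      intro x
      induction x with
      | zero => intro lam _; norm_num
      | succ x ih =>
          intro lam hlam
          have hmem := memxα x lam hlam
          have e : lam + ((x+1:ℕ):ℝ) * α = (lam + (x:ℝ) * α) + α := by push_cast; ring
          rw [e, (hw'rel _ hmem).1, (hwrel _ hmem).1, neg_one_pow_sq_mul]
          exact ih lam hlam
    have pairB : ∀ (y : ℕ) (lam : ℝ), lam ∈ latF α β →
        w' (lam + (y:ℝ) * β) * w (lam + (y:ℝ) * β) = w' lam * w lam := by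
      intro y
      induction y with
      | zero => intro lam _; norm_num
      | succ y ih =>
          intro lam hlam
          have hmem : lam + (y:ℝ) * β ∈ latF α β := by
            obtain ⟨a, b, rfl⟩ := hlam
            exact ⟨a, b + y, by push_cast; ring⟩
          have e : lam + ((y+1:ℕ):ℝ) * β = (lam + (y:ℝ) * β) + β := by push_cast; ring
          rw [e, (hw'rel _ hmem).2, (hwrel _ hmem).2, neg_one_pow_sq_mul]
          exact ih lam hlam
    -- one-step invariance of the product
    have hstep : ∀ k : ℤ, w' (((k + 1 : ℤ):ℝ) * γ) * w (((k + 1 : ℤ):ℝ) * γ)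
        = w' ((k:ℝ) * γ) * w ((k:ℝ) * γ) := by
      intro k
      have hmem : ((k:ℝ) * γ) ∈ latF α β := (hFiff _).mpr ⟨k, rfl⟩
      have hmem2 : ((k:ℝ) * γ) + (p':ℝ) * α ∈ latF α β := memxα p' _ hmem
      have hcast : (p':ℝ) * (n:ℝ) = (q':ℝ) * (m:ℝ) + 1 := by exact_mod_cast hpq'
      have e : ((k:ℝ) * γ + (p':ℝ) * α) + (q':ℝ) * β = ((k + 1 : ℤ):ℝ) * γ := by
        rw [hα, hβ]; push_cast; nlinarith [hcast]
      calc w' (((k + 1 : ℤ):ℝ) * γ) * w (((k + 1 : ℤ):ℝ) * γ)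
          = w' (((k:ℝ) * γ + (p':ℝ) * α) + (q':ℝ) * β)
            * w (((k:ℝ) * γ + (p':ℝ) * α) + (q':ℝ) * β) := by rw [e]
        _ = w' ((k:ℝ) * γ + (p':ℝ) * α) * w ((k:ℝ) * γ + (p':ℝ) * α) := pairB q' _ hmem2
        _ = w' ((k:ℝ) * γ) * w ((k:ℝ) * γ) := pairA p' _ hmem
    set U : ℤ → ℝ := fun z => w' ((z:ℝ) * γ) * w ((z:ℝ) * γ) with hU
    have hstepU : ∀ k : ℤ, U (k + 1) = U k := fun k => hstep k
    have hu : ∀ k : ℤ, U k = 1 := by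
      intro k
      induction k using Int.induction_on with
      | zero =>
          show w' (((0:ℤ):ℝ) * γ) * w (((0:ℤ):ℝ) * γ) = 1
          have e0 : (((0:ℤ):ℝ)) * γ = 0 := by push_cast; ring
          rw [e0, hw'0, hw0]; norm_num
      | succ i ih => exact (hstepU i).trans ih
      | pred i ih =>
          have hs := hstepU (-(i:ℤ) - 1)
          rw [show (-(i:ℤ) - 1) + 1 = -(i:ℤ) by ring] at hs
          rw [← hs]
          exact ih
    have hker : w' ((k:ℝ) * γ) * w ((k:ℝ) * γ) = 1 := hu k
    rcases hwpm ((k:ℝ) * γ) with h1 | h1 <;> rw [h1] at hker ⊢ <;> linarith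

lemma latF_comm (α β : ℝ) : latF α β = latF β α := by
  ext u
  constructor <;> rintro ⟨x, y, rfl⟩ <;> exact ⟨y, x, by ring⟩

lemma config_symm (α β : ℝ) (ℒ₁ ℒ₂ : ℝ → ℕ) (h : Config α β ℒ₁ ℒ₂) :
    Config β α ℒ₂ ℒ₁ := by
  constructor
  · intro u hu
    obtain ⟨x, y, rfl⟩ := h.supp2 u hu
    exact ⟨y, x, by ring⟩
  · intro u hu
    obtain ⟨x, y, rfl⟩ := h.supp1 u hu
    exact ⟨y, x, by ring⟩
  · exact h.fin2
  · exact h.fin1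
  · intro v hv
    have hv' : v ∈ latV α β := by
      obtain ⟨x, y, rfl⟩ := hv
      exact ⟨y, x, by ring⟩
    have hc := h.conserv v hv'
    omega

lemma Concl_symm (α β : ℝ) (ℒ₁ ℒ₂ : ℝ → ℕ) (h : Concl β α ℒ₂ ℒ₁) :
    Concl α β ℒ₁ ℒ₂ := by
  obtain ⟨w, ⟨hpm, h0, hrel⟩, huniq⟩ := h
  refine ⟨w, ⟨?_, h0, ?_⟩, ?_⟩
  · intro lam hlam
    exact hpm lam (latF_comm β α ▸ hlam)
  · intro lam hlam
    have hh := hrel lam (latF_comm β α ▸ hlam)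
    exact ⟨hh.2, hh.1⟩
  · intro w' ⟨a, b, c⟩ lam hlam
    refine huniq w' ⟨?_, b, ?_⟩ lam (latF_comm β α ▸ hlam)
    · intro l hl
      exact a l (latF_comm α β ▸ hl)
    · intro l hl
      have hh := c l (latF_comm α β ▸ hl)
      exact ⟨hh.2, hh.1⟩

lemma degen (α β : ℝ) (hβ0 : β = 0) (hα : α ≠ 0) (ℒ₁ ℒ₂ : ℝ → ℕ)
    (hconf : Config α β ℒ₁ ℒ₂) : Concl α β ℒ₁ ℒ₂ := by
  subst hβ0
  -- ℒ₂ vanishes identically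
  obtain ⟨N₂, hN₂⟩ := exists_bound ℒ₂ hconf.fin2 α 0 hα
  set g : ℤ → ℕ := fun k => ℒ₂ ((k:ℝ) * α) with hg
  have hgstep : ∀ k : ℤ, g k = g (k + (1:ℕ)) := by
    intro k
    have hv : (k:ℝ) * α + α / 2 ∈ latV α 0 := ⟨k, 0, by push_cast; ring⟩
    have hc := hconf.conserv _ hv
    have e1 : (k:ℝ) * α + α / 2 + 0 / 2 = (k:ℝ) * α + α / 2 := by ring
    have e2 : (k:ℝ) * α + α / 2 + α / 2 = ((k + 1 : ℤ):ℝ) * α := by push_cast; ring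
    have e3 : (k:ℝ) * α + α / 2 - 0 / 2 = (k:ℝ) * α + α / 2 := by ring
    have e4 : (k:ℝ) * α + α / 2 - α / 2 = (k:ℝ) * α := by ring
    rw [e1, e2, e3, e4] at hc
    have : ℒ₂ (((k + 1 : ℤ):ℝ) * α) = ℒ₂ ((k:ℝ) * α) := by omega
    show ℒ₂ ((k:ℝ) * α) = ℒ₂ (((k + (1:ℕ) : ℤ):ℝ) * α)
    push_cast at this ⊢
    omega
  have hgzero : ∀ k, g k = 0 := by
    apply const_eventually_zero g 1 one_pos hgstep (N₂ + 1)
    intro k hk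
    show ℒ₂ ((k:ℝ) * α) = 0
    have := hN₂ k (by omega)
    rw [add_zero] at this
    exact this
  have hL2 : ∀ u, ℒ₂ u = 0 := by
    intro u
    by_contra hu
    obtain ⟨x, y, rfl⟩ := hconf.supp2 u hu
    have e : (x:ℝ) * α + (y:ℝ) * 0 + 0 / 2 = (x:ℝ) * α := by ring
    rw [e] at hu
    exact hu (hgzero x)
  have hlf2 : ∀ x : ℝ, lfun ℒ₂ x = 0 := by
    intro x
    unfold lfun
    have e : (fun e : ℝ => if x < e then ℒ₂ e else 0) = fun _ => 0 := by
      funext e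
      rw [hL2 e]
      simp
    rw [e, finsum_zero]
  -- lattice
  have hFiff : ∀ lam : ℝ, lam ∈ latF α 0 ↔ ∃ k : ℤ, lam = (k:ℝ) * α := by
    intro lam
    constructor
    · rintro ⟨x, y, rfl⟩
      exact ⟨x, by ring⟩
    · rintro ⟨k, rfl⟩
      exact ⟨k, 0, by ring⟩
  -- weight
  set φd : ℤ → ZMod 2 := fun k => ((lfun ℒ₁ ((k:ℝ) * α + α / 2) : ℕ) : ZMod 2) with hφd
  set Φd : ℤ → ZMod 2 := fun k => psum φd k with hΦd
  set w : ℝ → ℝ := fun x => eps (Φd ⌊x / α⌋) with hwdef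
  have hwk : ∀ k : ℤ, w ((k:ℝ) * α) = eps (Φd k) := by
    intro k
    show eps (Φd ⌊((k:ℝ) * α) / α⌋) = eps (Φd k)
    rw [mul_div_cancel_right₀ _ hα, Int.floor_intCast]
  have hw0 : w 0 = 1 := by
    have h0 : ((0:ℤ):ℝ) * α = 0 := by push_cast; ring
    rw [← h0, hwk 0]
    show eps (psum φd 0) = 1
    rw [psum_zero]
    norm_num [eps]
  have hwpm : ∀ x : ℝ, w x = 1 ∨ w x = -1 := fun x => eps_pm _
  have hrelα : ∀ k : ℤ, w ((k:ℝ) * α + α)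
      = (-1:ℝ) ^ (lfun ℒ₁ ((k:ℝ) * α + α / 2)) * w ((k:ℝ) * α) := by
    intro k
    have e : (k:ℝ) * α + α = ((k + 1 : ℤ):ℝ) * α := by push_cast; ring
    rw [e, hwk (k + 1), hwk k]
    have hshift : Φd (k + 1) = Φd k + φd k := psum_succ φd k
    rw [hshift, eps_add, eps_natCast, mul_comm (eps (Φd k)) _]
  refine ⟨w, ⟨fun lam _ => hwpm lam, hw0, ?_⟩, ?_⟩
  · intro lam hlam
    obtain ⟨k, rfl⟩ := (hFiff lam).mp hlam
    refine ⟨hrelα k, ?_⟩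
    rw [hlf2]
    norm_num
  · rintro w' ⟨hw'pm, hw'0, hw'rel⟩ lam hlam
    obtain ⟨k, rfl⟩ := (hFiff lam).mp hlam
    set U : ℤ → ℝ := fun z => w' ((z:ℝ) * α) * w ((z:ℝ) * α) with hU
    have hstepU : ∀ j : ℤ, U (j + 1) = U j := by
      intro j
      have hmem : ((j:ℝ) * α) ∈ latF α 0 := (hFiff _).mpr ⟨j, rfl⟩
      have e : ((j + 1 : ℤ):ℝ) * α = (j:ℝ) * α + α := by push_cast; ring
      show w' (((j + 1 : ℤ):ℝ) * α) * w (((j + 1 : ℤ):ℝ) * α) = _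
      rw [e, (hw'rel _ hmem).1, hrelα j, neg_one_pow_sq_mul]
    have hu : ∀ j : ℤ, U j = 1 := by
      intro j
      induction j using Int.induction_on with
      | zero =>
          show w' (((0:ℤ):ℝ) * α) * w (((0:ℤ):ℝ) * α) = 1
          have e0 : ((0:ℤ):ℝ) * α = 0 := by push_cast; ring
          rw [e0, hw'0, hw0]; norm_num
      | succ i ih => exact (hstepU i).trans ih
      | pred i ih =>
          have hs := hstepU (-(i:ℤ) - 1)
          rw [show (-(i:ℤ) - 1) + 1 = -(i:ℤ) by ring] at hs
          rw [← hs]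
          exact ih
    have hker : w' ((k:ℝ) * α) * w ((k:ℝ) * α) = 1 := hu k
    rcases hwpm ((k:ℝ) * α) with h1 | h1 <;> rw [h1] at hker ⊢ <;> linarith


/-- There is a unique function `w : F → {1,−1}` with `w(0) = 1`,
`w(λ+α) = (−1)^{l₁(λ+α/2)}·w(λ)` and `w(λ+β) = (−1)^{l₂(λ+β/2)}·w(λ)` for all `λ ∈ F`. -/
theorem stmt13 (m n : ℕ) (hmn : Nat.Coprime m n) (α β : ℝ)
    (hαβ : (α, β) ≠ ((0 : ℝ), (0 : ℝ))) (hlin : (m : ℝ) * α + (n : ℝ) * β = 0)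
    (ℒ₁ ℒ₂ : ℝ → ℕ) (hconf : Config α β ℒ₁ ℒ₂) :
    ∃ w : ℝ → ℝ,
      ((∀ lam ∈ latF α β, w lam = 1 ∨ w lam = -1) ∧ w 0 = 1 ∧
        (∀ lam ∈ latF α β,
          w (lam + α) = (-1 : ℝ) ^ lfun ℒ₁ (lam + α / 2) * w lam ∧
          w (lam + β) = (-1 : ℝ) ^ lfun ℒ₂ (lam + β / 2) * w lam)) ∧
      ∀ w' : ℝ → ℝ,
        ((∀ lam ∈ latF α β, w' lam = 1 ∨ w' lam = -1) ∧ w' 0 = 1 ∧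
          (∀ lam ∈ latF α β,
            w' (lam + α) = (-1 : ℝ) ^ lfun ℒ₁ (lam + α / 2) * w' lam ∧
            w' (lam + β) = (-1 : ℝ) ^ lfun ℒ₂ (lam + β / 2) * w' lam)) →
        ∀ lam ∈ latF α β, w' lam = w lam := by
  show Concl α β ℒ₁ ℒ₂
  rcases Nat.eq_zero_or_pos m with hm0 | hm
  · subst hm0
    have hn1 : n = 1 := by simpa [Nat.coprime_zero_left] using hmn
    subst hn1
    have hβ0 : β = 0 := by
      have : (0:ℝ) * α + 1 * β = 0 := by exact_mod_cast hlin
      linarith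
    have hα0 : α ≠ 0 := by
      rintro rfl
      exact hαβ (by simp [hβ0])
    exact degen α β hβ0 hα0 ℒ₁ ℒ₂ hconf
  rcases Nat.eq_zero_or_pos n with hn0 | hn
  · subst hn0
    have hm1 : m = 1 := by simpa [Nat.coprime_zero_right] using hmn
    subst hm1
    have hα0 : α = 0 := by
      have : (1:ℝ) * α + 0 * β = 0 := by exact_mod_cast hlin
      linarith
    have hβ0 : β ≠ 0 := by
      rintro rfl
      exact hαβ (by simp [hα0])
    exact Concl_symm α β ℒ₁ ℒ₂ (degen β α hα0 hβ0 ℒ₂ ℒ₁ (config_symm α β ℒ₁ ℒ₂ hconf))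
  -- main case : m, n ≥ 1
  have hnR : (n:ℝ) ≠ 0 := by positivity
  have hmR : (m:ℝ) > 0 := by positivity
  have hαne : α ≠ 0 := by
    intro h
    have hb : β = 0 := by
      rw [h] at hlin
      have : (n:ℝ) * β = 0 := by linarith
      rcases mul_eq_zero.mp this with h' | h'
      · exact absurd h' hnR
      · exact h'
    exact hαβ (by simp [h, hb])
  have hβval : β = -((m:ℝ) * (α / n)) := by
    field_simp
    linarith
  rcases lt_trichotomy α 0 with hneg | hz | hpos
  · -- α < 0 : swap roles
    apply Concl_symm
    have hγpos : (0:ℝ) < -(α / n) := by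
      have : α / n < 0 := div_neg_of_neg_of_pos hneg (by positivity)
      linarith
    apply core n m hn hm hmn.symm (-(α / n)) hγpos β α ?_ ?_ ℒ₂ ℒ₁
      (config_symm α β ℒ₁ ℒ₂ hconf)
    · rw [hβval]; ring
    · field_simp
  · exact absurd hz hαne
  · exact core m n hm hn hmn (α / n) (by positivity) α β (by field_simp) hβval ℒ₁ ℒ₂ hconf

end
end

section
/- Assume |ξ| = 1, and let w: F → {1,−1} be the unique function with w(0)=1 satisfying w(λ+α) = (−1)^{l₁(λ+α/2)}w(λ) and w(λ+β) = (−1)^{l₂(λ+β/2)}w(λ) for all λ ∈ F. For f,g ∈ Γ₀(L_ξ) set ⟨f,g⟩ = Σ_{λ∈F} w(λ)·f(x_λ,y_λ)·conj(g(x_λ,y_λ)), where for each λ ∈ F, (x_λ,y_λ) ∈ ℤ² is any pair with x_λα+y_λβ = λ. Then: (i) each summand is independent of the choice of (x_λ,y_λ) and only finitely many summands are nonzero, so ⟨·,·⟩ is well defined; (ii) ⟨·,·⟩ is linear in the first argument and satisfies ⟨f,g⟩ = conj(⟨g,f⟩); (iii) ⟨·,·⟩ is non-degenerate on Γ₀(L_ξ);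 (iv) ⟨·,·⟩ is invariant: ⟨X̃ᵢ^± f, g⟩ = ⟨f, X̃ᵢ^∓ g⟩ for i = 1,2 and ⟨H̃f, g⟩ = ⟨f, H̃g⟩ for all f,g ∈ Γ₀(L_ξ). -/
open Complex

noncomputable section
open scoped Classical

/-- `Γ(L_ξ)`: the `ξ`-twisted `(m,n)`-periodic functions on `ℤ²`. -/
def GammaSet (m n : ℤ) (ξ : ℂ) : Set (ℤ × ℤ → ℂ) :=
  {f | ∀ x y : ℤ, f (x - m, y - n) = ξ * f (x, y)}

/-- `Γ₀(L_ξ)`: elements of `Γ(L_ξ)` supported on finitely many `ℤ·(m,n)`-cosets. -/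
def Gamma0Set (m n : ℤ) (ξ : ℂ) : Set (ℤ × ℤ → ℂ) :=
  {f | f ∈ GammaSet m n ξ ∧
    ∃ S : Finset (ℤ × ℤ), ∀ p : ℤ × ℤ, f p ≠ 0 →
      ∃ q ∈ S, ∃ k : ℤ, p = (q.1 + k * m, q.2 + k * n)}
section Helpers

lemma ker_lemma {m n : ℕ} (hmn : Nat.Coprime m n) {α β : ℝ}
    (hαβ : (α, β) ≠ ((0:ℝ),(0:ℝ))) (hlin : (m:ℝ)*α + (n:ℝ)*β = 0)
    {x y : ℤ} (h : (x:ℝ)*α + (y:ℝ)*β = 0) :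
    ∃ k : ℤ, x = k * (m:ℤ) ∧ y = k * (n:ℤ) := by
  rcases Nat.eq_zero_or_pos m with hm | hm
  · subst hm
    have hn : n = 1 := (Nat.coprime_zero_left n).mp hmn
    subst hn
    have hβ : β = 0 := by simpa using hlin
    have hα : α ≠ 0 := fun h0 => hαβ (by simp [h0, hβ])
    have hx : x = 0 := by
      have hx' : (x:ℝ) * α = 0 := by simpa [hβ] using h
      exact_mod_cast (mul_eq_zero.mp hx').resolve_right hα
    exact ⟨y, by simp [hx], by simp⟩
  · have hmR : (m:ℝ) ≠ 0 := Nat.cast_ne_zero.mpr hm.ne'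
    have hβ : β ≠ 0 := by
      rintro rfl
      have h2 : (m:ℝ) * α = 0 := by simpa using hlin
      have hα : α = 0 := (mul_eq_zero.mp h2).resolve_left hmR
      exact hαβ (by simp [hα])
    have hkey : ((x * n - y * m : ℤ) : ℝ) * β = 0 := by
      push_cast
      linear_combination (x:ℝ) * hlin - (m:ℝ) * h
    have hxy : x * (n:ℤ) = y * (m:ℤ) := by
      have h0 : ((x * n - y * m : ℤ) : ℝ) = 0 := (mul_eq_zero.mp hkey).resolve_right hβ
      have h1 : (x * (n:ℤ) - y * (m:ℤ) : ℤ) = 0 := by exact_mod_cast h0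
      linarith
    have hcop : IsCoprime (m:ℤ) (n:ℤ) := Int.isCoprime_iff_gcd_eq_one.mpr (by simpa using hmn)
    have hdvd : (m:ℤ) ∣ x := hcop.dvd_of_dvd_mul_right ⟨y, by linarith⟩
    obtain ⟨k, hk⟩ := hdvd
    refine ⟨k, by rw [hk]; ring, ?_⟩
    have hm' : (m:ℤ) ≠ 0 := by exact_mod_cast hm.ne'
    have h3 : y * (m:ℤ) = (k * n) * m := by rw [← hxy, hk]; ring
    exact mul_right_cancel₀ hm' h3

lemma Gamma_shift {m n : ℕ} {ξ : ℂ} (hξ : ξ ≠ 0) {f : ℤ × ℤ → ℂ}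
    (hf : f ∈ GammaSet (m:ℤ) (n:ℤ) ξ) (k : ℤ) (x y : ℤ) :
    f (x - k * m, y - k * n) = ξ ^ k * f (x, y) := by
  induction k using Int.induction_on with
  | zero => simp
  | succ i ih =>
      have h1 : x - ((i:ℤ)+1) * m = (x - i * m) - m := by ring
      have h2 : y - ((i:ℤ)+1) * n = (y - i * n) - n := by ring
      rw [h1, h2, hf (x - i*m) (y - i*n), ih, zpow_add_one₀ hξ]
      ring
  | pred i ih =>
      have h0 := hf (x - (-(i:ℤ) - 1) * m) (y - (-(i:ℤ) - 1) * n)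
      have h1 : x - (-(i:ℤ) - 1) * m - m = x - (-(i:ℤ)) * m := by ring
      have h2 : y - (-(i:ℤ) - 1) * n - n = y - (-(i:ℤ)) * n := by ring
      rw [h1, h2, ih] at h0
      have h3 : f (x - (-(i:ℤ) - 1) * m, y - (-(i:ℤ) - 1) * n)
          = ξ⁻¹ * (ξ ^ (-(i:ℤ)) * f (x, y)) := by
        rw [h0, ← mul_assoc, inv_mul_cancel₀ hξ, one_mul]
      rw [h3, zpow_sub_one₀ hξ]
      ring

lemma pair_shift {m n : ℕ} {ξ : ℂ} (hξ : ‖ξ‖ = 1) {f g : ℤ × ℤ → ℂ}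
    (hf : f ∈ GammaSet (m:ℤ) (n:ℤ) ξ) (hg : g ∈ GammaSet (m:ℤ) (n:ℤ) ξ)
    (k x y x' y' : ℤ) :
    f (x - k * m, y - k * n) * (starRingEnd ℂ) (g (x' - k * m, y' - k * n)) =
      f (x, y) * (starRingEnd ℂ) (g (x', y')) := by
  have hξ0 : ξ ≠ 0 := by intro h; rw [h] at hξ; simp at hξ
  rw [Gamma_shift hξ0 hf k x y, Gamma_shift hξ0 hg k x' y', map_mul, map_zpow₀]
  have h1 : ξ ^ k * (starRingEnd ℂ) ξ ^ k = 1 := by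
    rw [← mul_zpow, Complex.mul_conj, Complex.normSq_eq_norm_sq, hξ]
    norm_num
  linear_combination (f (x, y) * (starRingEnd ℂ) (g (x', y'))) * h1

lemma pair_indep {m n : ℕ} (hmn : Nat.Coprime m n) {α β : ℝ}
    (hαβ : (α, β) ≠ ((0:ℝ),(0:ℝ))) (hlin : (m:ℝ)*α + (n:ℝ)*β = 0)
    {ξ : ℂ} (hξ : ‖ξ‖ = 1) {f g : ℤ × ℤ → ℂ}
    (hf : f ∈ GammaSet (m:ℤ) (n:ℤ) ξ) (hg : g ∈ GammaSet (m:ℤ) (n:ℤ) ξ)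
    (p q p' q' : ℤ × ℤ)
    (hpp' : (p.1:ℝ) * α + (p.2:ℝ) * β = (p'.1:ℝ) * α + (p'.2:ℝ) * β)
    (hd1 : q.1 - p.1 = q'.1 - p'.1) (hd2 : q.2 - p.2 = q'.2 - p'.2) :
    f p * (starRingEnd ℂ) (g q) = f p' * (starRingEnd ℂ) (g q') := by
  obtain ⟨k, hk1, hk2⟩ := ker_lemma hmn hαβ hlin (x := p.1 - p'.1) (y := p.2 - p'.2)
    (by push_cast; linear_combination hpp')
  have hp' : p' = (p.1 - k*(m:ℤ), p.2 - k*(n:ℤ)) := by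
    refine Prod.ext_iff.mpr ⟨?_, ?_⟩
    · show p'.1 = p.1 - k*(m:ℤ)
      linear_combination -hk1
    · show p'.2 = p.2 - k*(n:ℤ)
      linear_combination -hk2
  have hq' : q' = (q.1 - k*(m:ℤ), q.2 - k*(n:ℤ)) := by
    refine Prod.ext_iff.mpr ⟨?_, ?_⟩
    · show q'.1 = q.1 - k*(m:ℤ)
      linear_combination -hd1 - hk1
    · show q'.2 = q.2 - k*(n:ℤ)
      linear_combination -hd2 - hk2
  rw [hp', hq']
  exact (pair_shift hξ hf hg k p.1 p.2 q.1 q.2).symm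

lemma Beval (α β : ℝ) (key : ℝ → ℂ) (U : Finset ℝ) (hU1 : ↑U ⊆ latF α β)
    (hU2 : latF α β ∩ Function.support key ⊆ ↑U) :
    ∑ᶠ lam ∈ latF α β, key lam = ∑ lam ∈ U, key lam := by
  apply finsum_mem_eq_sum_of_inter_support_eq
  apply Set.Subset.antisymm
  · exact fun x hx => ⟨hU2 hx, hx.2⟩
  · exact fun x hx => ⟨hU1 hx.1, hx.2⟩

lemma supp_fin {m n : ℕ} {α β : ℝ} (hlin : (m:ℝ)*α + (n:ℝ)*β = 0)
    (f : ℤ × ℤ → ℂ) (S : Finset (ℤ × ℤ))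
    (hS : ∀ p : ℤ × ℤ, f p ≠ 0 → ∃ q ∈ S, ∃ k : ℤ, p = (q.1 + k * (m:ℤ), q.2 + k * (n:ℤ)))
    (rep : ℝ → ℤ × ℤ)
    (hrep : ∀ lam ∈ latF α β, ((rep lam).1 : ℝ) * α + ((rep lam).2 : ℝ) * β = lam)
    (key : ℝ → ℂ) (hkey : ∀ lam, key lam ≠ 0 → f (rep lam) ≠ 0) :
    (latF α β ∩ Function.support key).Finite := by
  apply Set.Finite.subset (S.finite_toSet.image (fun q => (q.1:ℝ) * α + (q.2:ℝ) * β))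
  rintro lam ⟨hlamF, hlam⟩
  obtain ⟨q, hqS, k, hk⟩ := hS _ (hkey lam hlam)
  refine ⟨q, hqS, ?_⟩
  have hT := hrep lam hlamF
  have h1 : (rep lam).1 = q.1 + k * m := by rw [hk]
  have h2 : (rep lam).2 = q.2 + k * n := by rw [hk]
  have hc1 : ((rep lam).1 : ℝ) = (q.1:ℝ) + (k:ℝ) * m := by rw [h1]; push_cast; ring
  have hc2 : ((rep lam).2 : ℝ) = (q.2:ℝ) + (k:ℝ) * n := by rw [h2]; push_cast; ring
  linear_combination hT - α * hc1 - β * hc2 - (k:ℝ) * hlin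

lemma conj_qfun (ℒ : ℝ → ℕ) (u : ℝ) :
    (starRingEnd ℂ) (qfun ℒ u) = (-1:ℂ) ^ lfun ℒ u * qfun ℒ u := by
  unfold qfun
  rw [map_mul, map_pow, Complex.conj_I, Complex.conj_ofReal, neg_pow]
  ring

end Helpers
/-- Assume `|ξ| = 1` and let `w` be the sign function on `F` and `rep` a choice of
representatives `(x_λ, y_λ)` for `λ ∈ F`. Then the sesquilinear form
`⟨f,g⟩ = Σ_{λ∈F} w(λ) f(x_λ,y_λ) conj(g(x_λ,y_λ))` on `Γ₀(L_ξ)` is well defined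
(summands independent of choices, finitely many nonzero terms), linear in the first
argument, Hermitian-symmetric, non-degenerate, and `∗`-invariant. -/
theorem stmt14 (m n : ℕ) (hmn : Nat.Coprime m n) (α β : ℝ)
    (hαβ : (α, β) ≠ ((0 : ℝ), (0 : ℝ))) (hlin : (m : ℝ) * α + (n : ℝ) * β = 0)
    (ℒ₁ ℒ₂ : ℝ → ℕ) (hconf : Config α β ℒ₁ ℒ₂)
    (ξ : ℂ) (hξ : ‖ξ‖ = 1)
    (w : ℝ → ℝ) (hwpm : ∀ lam ∈ latF α β, w lam = 1 ∨ w lam = -1) (hw0 : w 0 = 1)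
    (hwrec : ∀ lam ∈ latF α β,
      w (lam + α) = (-1 : ℝ) ^ lfun ℒ₁ (lam + α / 2) * w lam ∧
      w (lam + β) = (-1 : ℝ) ^ lfun ℒ₂ (lam + β / 2) * w lam)
    (rep : ℝ → ℤ × ℤ)
    (hrep : ∀ lam ∈ latF α β, ((rep lam).1 : ℝ) * α + ((rep lam).2 : ℝ) * β = lam)
    (B : (ℤ × ℤ → ℂ) → (ℤ × ℤ → ℂ) → ℂ)
    (hB : ∀ f g : ℤ × ℤ → ℂ,
      B f g = ∑ᶠ lam ∈ latF α β,
        ((w lam : ℝ) : ℂ) * f (rep lam) * (starRingEnd ℂ) (g (rep lam))) :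
    -- (i) well-definedness
    (∀ f ∈ Gamma0Set (m : ℤ) (n : ℤ) ξ, ∀ g ∈ Gamma0Set (m : ℤ) (n : ℤ) ξ,
      (∀ lam ∈ latF α β, ∀ p p' : ℤ × ℤ,
        (p.1 : ℝ) * α + (p.2 : ℝ) * β = lam → (p'.1 : ℝ) * α + (p'.2 : ℝ) * β = lam →
        f p * (starRingEnd ℂ) (g p) = f p' * (starRingEnd ℂ) (g p')) ∧
      {lam ∈ latF α β |
        ((w lam : ℝ) : ℂ) * f (rep lam) * (starRingEnd ℂ) (g (rep lam)) ≠ 0}.Finite) ∧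
    -- (ii) sesquilinearity and Hermitian symmetry
    (∀ c : ℂ, ∀ f f' g : ℤ × ℤ → ℂ,
      f ∈ Gamma0Set (m : ℤ) (n : ℤ) ξ → f' ∈ Gamma0Set (m : ℤ) (n : ℤ) ξ →
      g ∈ Gamma0Set (m : ℤ) (n : ℤ) ξ →
      B (c • f + f') g = c * B f g + B f' g) ∧
    (∀ f ∈ Gamma0Set (m : ℤ) (n : ℤ) ξ, ∀ g ∈ Gamma0Set (m : ℤ) (n : ℤ) ξ,
      B f g = (starRingEnd ℂ) (B g f)) ∧
    -- (iii) non-degeneracy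
    (∀ f ∈ Gamma0Set (m : ℤ) (n : ℤ) ξ,
      (∀ g ∈ Gamma0Set (m : ℤ) (n : ℤ) ξ, B f g = 0) → f = 0) ∧
    -- (iv) invariance
    (∀ f ∈ Gamma0Set (m : ℤ) (n : ℤ) ξ, ∀ g ∈ Gamma0Set (m : ℤ) (n : ℤ) ξ,
      (∀ s : ℤ, s = 1 ∨ s = -1 →
        B (opX1 (qfun ℒ₁) α β s f) g = B f (opX1 (qfun ℒ₁) α β (-s) g) ∧
        B (opX2 (qfun ℒ₂) α β s f) g = B f (opX2 (qfun ℒ₂) α β (-s) g)) ∧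
      B (opH α β f) g = B f (opH α β g)) := by
  have hξ0 : ξ ≠ 0 := by intro h; rw [h] at hξ; simp at hξ
  have hwne : ∀ lam ∈ latF α β, ((w lam : ℝ) : ℂ) ≠ 0 := by
    intro lam hlam
    rcases hwpm lam hlam with h | h <;> simp [h]
  have hfin : ∀ f g : ℤ × ℤ → ℂ, f ∈ Gamma0Set (m:ℤ) (n:ℤ) ξ →
      (latF α β ∩ Function.support (fun lam =>
        ((w lam : ℝ) : ℂ) * f (rep lam) * (starRingEnd ℂ) (g (rep lam)))).Finite := by
    intro f g hf
    obtain ⟨-, S, hS⟩ := hf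
    refine supp_fin hlin f S hS rep hrep _ ?_
    intro lam h h0
    exact h (by rw [h0]; ring)
  refine ⟨?_, ?_, ?_, ?_, ?_⟩
  -- (i)
  · intro f hf g hg
    constructor
    · intro lam hlam p p' hp hp'
      exact pair_indep hmn hαβ hlin hξ hf.1 hg.1 p p p' p'
        (hp.trans hp'.symm) (by ring) (by ring)
    · exact (hfin f g hf).subset (fun lam hlam => ⟨hlam.1, hlam.2⟩)
  -- (ii) linearity
  · intro c f f' g hf hf' hg
    have h1 := hfin f g hf
    have h2 := hfin f' g hf'
    have hpt : ∀ lam : ℝ, ((w lam : ℝ) : ℂ) * (c • f + f') (rep lam) * (starRingEnd ℂ) (g (rep lam))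
        = c * (((w lam : ℝ) : ℂ) * f (rep lam) * (starRingEnd ℂ) (g (rep lam)))
          + ((w lam : ℝ) : ℂ) * f' (rep lam) * (starRingEnd ℂ) (g (rep lam)) := by
      intro lam
      simp only [Pi.add_apply, Pi.smul_apply, smul_eq_mul]
      ring
    have hU1 : ↑(h1.toFinset ∪ h2.toFinset) ⊆ latF α β := by
      intro x hx
      rw [Finset.coe_union, Set.Finite.coe_toFinset, Set.Finite.coe_toFinset] at hx
      exact hx.elim (fun h => h.1) (fun h => h.1)
    have hsub1 : latF α β ∩ Function.support (fun lam =>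
        ((w lam : ℝ) : ℂ) * f (rep lam) * (starRingEnd ℂ) (g (rep lam)))
        ⊆ ↑(h1.toFinset ∪ h2.toFinset) := by
      rw [Finset.coe_union, Set.Finite.coe_toFinset, Set.Finite.coe_toFinset]
      exact Set.subset_union_left
    have hsub2 : latF α β ∩ Function.support (fun lam =>
        ((w lam : ℝ) : ℂ) * f' (rep lam) * (starRingEnd ℂ) (g (rep lam)))
        ⊆ ↑(h1.toFinset ∪ h2.toFinset) := by
      rw [Finset.coe_union, Set.Finite.coe_toFinset, Set.Finite.coe_toFinset]
      exact Set.subset_union_right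
    have hsub12 : latF α β ∩ Function.support (fun lam =>
        ((w lam : ℝ) : ℂ) * (c • f + f') (rep lam) * (starRingEnd ℂ) (g (rep lam)))
        ⊆ ↑(h1.toFinset ∪ h2.toFinset) := by
      rintro lam ⟨hl, hs⟩
      have hs' : ((w lam : ℝ) : ℂ) * (c • f + f') (rep lam) * (starRingEnd ℂ) (g (rep lam)) ≠ 0 := hs
      have hor : ((w lam : ℝ) : ℂ) * f (rep lam) * (starRingEnd ℂ) (g (rep lam)) ≠ 0 ∨
          ((w lam : ℝ) : ℂ) * f' (rep lam) * (starRingEnd ℂ) (g (rep lam)) ≠ 0 := by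
        by_contra hcon
        push_neg at hcon
        exact hs' (by rw [hpt lam, hcon.1, hcon.2]; ring)
      rcases hor with h | h
      · exact hsub1 ⟨hl, h⟩
      · exact hsub2 ⟨hl, h⟩
    have e12 : (∑ᶠ lam ∈ latF α β, ((w lam : ℝ) : ℂ) * (c • f + f') (rep lam) * (starRingEnd ℂ) (g (rep lam)))
        = ∑ lam ∈ h1.toFinset ∪ h2.toFinset, ((w lam : ℝ) : ℂ) * (c • f + f') (rep lam) * (starRingEnd ℂ) (g (rep lam)) :=
      Beval α β _ _ hU1 hsub12
    have e1 : (∑ᶠ lam ∈ latF α β, ((w lam : ℝ) : ℂ) * f (rep lam) * (starRingEnd ℂ) (g (rep lam)))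
        = ∑ lam ∈ h1.toFinset ∪ h2.toFinset, ((w lam : ℝ) : ℂ) * f (rep lam) * (starRingEnd ℂ) (g (rep lam)) :=
      Beval α β _ _ hU1 hsub1
    have e2 : (∑ᶠ lam ∈ latF α β, ((w lam : ℝ) : ℂ) * f' (rep lam) * (starRingEnd ℂ) (g (rep lam)))
        = ∑ lam ∈ h1.toFinset ∪ h2.toFinset, ((w lam : ℝ) : ℂ) * f' (rep lam) * (starRingEnd ℂ) (g (rep lam)) :=
      Beval α β _ _ hU1 hsub2
    rw [hB, hB, hB, e12, e1, e2, Finset.mul_sum, ← Finset.sum_add_distrib]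
    exact Finset.sum_congr rfl fun lam _ => hpt lam
  -- (ii) symmetry
  · intro f hf g hg
    have h2 := hfin g f hg
    have hU1 : ↑h2.toFinset ⊆ latF α β := by
      rw [Set.Finite.coe_toFinset]; exact fun x hx => hx.1
    have hconj : ∀ lam : ℝ, ((w lam : ℝ) : ℂ) * f (rep lam) * (starRingEnd ℂ) (g (rep lam))
        = (starRingEnd ℂ) (((w lam : ℝ) : ℂ) * g (rep lam) * (starRingEnd ℂ) (f (rep lam))) := by
      intro lam
      rw [map_mul, map_mul, Complex.conj_conj, Complex.conj_ofReal]
      ring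
    have hgf : B g f = ∑ lam ∈ h2.toFinset, ((w lam : ℝ) : ℂ) * g (rep lam) * (starRingEnd ℂ) (f (rep lam)) := by
      rw [hB]
      exact Beval α β _ _ hU1 (by rw [Set.Finite.coe_toFinset])
    have hsub1 : latF α β ∩ Function.support (fun lam =>
        ((w lam : ℝ) : ℂ) * f (rep lam) * (starRingEnd ℂ) (g (rep lam))) ⊆ ↑h2.toFinset := by
      rw [Set.Finite.coe_toFinset]
      rintro lam ⟨hl, hsup⟩
      refine ⟨hl, fun h0 => ?_⟩
      have h0' : ((w lam : ℝ) : ℂ) * g (rep lam) * (starRingEnd ℂ) (f (rep lam)) = 0 := h0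
      exact hsup (by show ((w lam : ℝ) : ℂ) * f (rep lam) * (starRingEnd ℂ) (g (rep lam)) = 0
                     rw [hconj lam, h0', map_zero])
    have hfg : B f g = ∑ lam ∈ h2.toFinset, ((w lam : ℝ) : ℂ) * f (rep lam) * (starRingEnd ℂ) (g (rep lam)) := by
      rw [hB]
      exact Beval α β _ _ hU1 hsub1
    rw [hfg, hgf, map_sum]
    exact Finset.sum_congr rfl fun lam _ => hconj lam
  -- (iii)
  · intro f hf hall
    funext p
    show f p = 0
    have hmn0 : (m:ℤ) ≠ 0 ∨ (n:ℤ) ≠ 0 := by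
      rcases Nat.eq_zero_or_pos m with h | h
      · right
        subst h
        have : n = 1 := (Nat.coprime_zero_left n).mp hmn
        simp [this]
      · left; exact_mod_cast h.ne'
    have huniq : ∀ k k' : ℤ, p.1 - k*(m:ℤ) = p.1 - k'*(m:ℤ) → p.2 - k*(n:ℤ) = p.2 - k'*(n:ℤ) → k = k' := by
      intro k k' ha hb
      rcases hmn0 with hm | hn
      · exact mul_right_cancel₀ hm (by linarith)
      · exact mul_right_cancel₀ hn (by linarith)
    classical
    let g0 : ℤ × ℤ → ℂ := fun q =>
      if h : ∃ k : ℤ, q.1 = p.1 - k * (m:ℤ) ∧ q.2 = p.2 - k * (n:ℤ) then ξ ^ h.choose else 0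
    have hnot : ∀ q : ℤ × ℤ, (¬ ∃ k : ℤ, q.1 = p.1 - k * (m:ℤ) ∧ q.2 = p.2 - k * (n:ℤ)) → g0 q = 0 :=
      fun q h => dif_neg h
    have hval : ∀ k : ℤ, g0 (p.1 - k * (m:ℤ), p.2 - k * (n:ℤ)) = ξ ^ k := by
      intro k
      have hex : ∃ k' : ℤ, p.1 - k * (m:ℤ) = p.1 - k' * (m:ℤ) ∧ p.2 - k * (n:ℤ) = p.2 - k' * (n:ℤ) :=
        ⟨k, rfl, rfl⟩
      show (if h : ∃ k' : ℤ, p.1 - k * (m:ℤ) = p.1 - k' * (m:ℤ) ∧ p.2 - k * (n:ℤ) = p.2 - k' * (n:ℤ)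
          then ξ ^ h.choose else 0) = ξ ^ k
      rw [dif_pos hex]
      exact (congrArg (fun t => ξ ^ t) (huniq k hex.choose hex.choose_spec.1 hex.choose_spec.2)).symm
    have hg0mem : g0 ∈ Gamma0Set (m:ℤ) (n:ℤ) ξ := by
      constructor
      · intro x y
        by_cases hxy : ∃ k : ℤ, x = p.1 - k * (m:ℤ) ∧ y = p.2 - k * (n:ℤ)
        · obtain ⟨k, rfl, rfl⟩ := hxy
          rw [show p.1 - k*(m:ℤ) - m = p.1 - (k+1)*(m:ℤ) by ring,
              show p.2 - k*(n:ℤ) - n = p.2 - (k+1)*(n:ℤ) by ring,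
              hval (k+1), hval k, zpow_add_one₀ hξ0]
          ring
        · have hxy2 : ¬ ∃ k : ℤ, x - (m:ℤ) = p.1 - k * (m:ℤ) ∧ y - (n:ℤ) = p.2 - k * (n:ℤ) := by
            rintro ⟨k, hk1, hk2⟩
            exact hxy ⟨k - 1, by linear_combination hk1, by linear_combination hk2⟩
          rw [hnot (x, y) hxy, hnot (x - (m:ℤ), y - (n:ℤ)) hxy2, mul_zero]
      · refine ⟨{p}, ?_⟩
        intro q hq
        have hex : ∃ k : ℤ, q.1 = p.1 - k * (m:ℤ) ∧ q.2 = p.2 - k * (n:ℤ) := by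
          by_contra h
          exact hq (hnot q h)
        obtain ⟨k, hk1, hk2⟩ := hex
        refine ⟨p, Finset.mem_singleton_self p, -k, ?_⟩
        refine Prod.ext_iff.mpr ⟨?_, ?_⟩
        · show q.1 = p.1 + (-k) * (m:ℤ)
          linear_combination hk1
        · show q.2 = p.2 + (-k) * (n:ℤ)
          linear_combination hk2
    have hBval := hall g0 hg0mem
    have hlam0 : ((p.1:ℝ) * α + (p.2:ℝ) * β) ∈ latF α β := ⟨p.1, p.2, rfl⟩
    have hU1 : ↑({(p.1:ℝ) * α + (p.2:ℝ) * β} : Finset ℝ) ⊆ latF α β := by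
      intro x hx
      rw [Finset.coe_singleton, Set.mem_singleton_iff] at hx
      rw [hx]; exact hlam0
    have hU2 : latF α β ∩ Function.support (fun lam =>
        ((w lam : ℝ) : ℂ) * f (rep lam) * (starRingEnd ℂ) (g0 (rep lam)))
        ⊆ ↑({(p.1:ℝ) * α + (p.2:ℝ) * β} : Finset ℝ) := by
      rintro lam ⟨hlamF, hsup⟩
      have hs' : ((w lam : ℝ) : ℂ) * f (rep lam) * (starRingEnd ℂ) (g0 (rep lam)) ≠ 0 := hsup
      have hg0ne : g0 (rep lam) ≠ 0 := by
        intro h0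
        exact hs' (by rw [h0, map_zero, mul_zero])
      have hex : ∃ k : ℤ, (rep lam).1 = p.1 - k * (m:ℤ) ∧ (rep lam).2 = p.2 - k * (n:ℤ) := by
        by_contra h
        exact hg0ne (hnot (rep lam) h)
      obtain ⟨k, hk1, hk2⟩ := hex
      have hT := hrep lam hlamF
      have hc1 : ((rep lam).1 : ℝ) = (p.1:ℝ) - (k:ℝ) * m := by exact_mod_cast hk1
      have hc2 : ((rep lam).2 : ℝ) = (p.2:ℝ) - (k:ℝ) * n := by exact_mod_cast hk2
      rw [Finset.coe_singleton, Set.mem_singleton_iff]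
      linear_combination -hT + α * hc1 + β * hc2 - (k:ℝ) * hlin
    rw [hB] at hBval
    rw [Beval α β _ _ hU1 hU2, Finset.sum_singleton] at hBval
    have hT0 := hrep _ hlam0
    obtain ⟨k, hk1, hk2⟩ := ker_lemma hmn hαβ hlin
      (x := (rep ((p.1:ℝ) * α + (p.2:ℝ) * β)).1 - p.1)
      (y := (rep ((p.1:ℝ) * α + (p.2:ℝ) * β)).2 - p.2)
      (by push_cast; linear_combination hT0)
    have hrep0 : rep ((p.1:ℝ) * α + (p.2:ℝ) * β) = (p.1 - (-k) * (m:ℤ), p.2 - (-k) * (n:ℤ)) := by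
      refine Prod.ext_iff.mpr ⟨?_, ?_⟩
      · show (rep ((p.1:ℝ) * α + (p.2:ℝ) * β)).1 = p.1 - (-k) * (m:ℤ)
        linear_combination hk1
      · show (rep ((p.1:ℝ) * α + (p.2:ℝ) * β)).2 = p.2 - (-k) * (n:ℤ)
        linear_combination hk2
    rw [hrep0, hval (-k), Gamma_shift hξ0 hf.1 (-k) p.1 p.2] at hBval
    have hwne0 := hwne _ hlam0
    have hξk : ξ ^ (-k) ≠ 0 := zpow_ne_zero _ hξ0
    have hcξ : (starRingEnd ℂ) (ξ ^ (-k)) ≠ 0 := by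
      intro h0
      apply hξk
      have := congrArg (starRingEnd ℂ) h0
      simpa using this
    have h1 := (mul_eq_zero.mp hBval).resolve_right hcξ
    have h2 := (mul_eq_zero.mp h1).resolve_left hwne0
    have h3 := (mul_eq_zero.mp h2).resolve_left hξk
    exact h3
  -- (iv)
  · intro f hf g hg
    constructor
    · intro s hs
      constructor
      · -- X1
        have hbij : Set.BijOn (fun lam => lam - (s:ℝ) * α) (latF α β) (latF α β) := by
          refine ⟨?_, fun a _ b _ h => by simpa using h, ?_⟩
          · rintro lam ⟨x, y, rfl⟩
            exact ⟨x - s, y, by push_cast; ring⟩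
          · rintro mu ⟨x, y, rfl⟩
            refine ⟨((x + s : ℤ):ℝ) * α + (y:ℝ) * β, ⟨x + s, y, rfl⟩, ?_⟩
            push_cast; ring
        have hpt : ∀ lam ∈ latF α β,
            ((w lam : ℝ) : ℂ) * opX1 (qfun ℒ₁) α β s f (rep lam) * (starRingEnd ℂ) (g (rep lam)) =
            ((w (lam - (s:ℝ) * α) : ℝ) : ℂ) * f (rep (lam - (s:ℝ) * α)) *
              (starRingEnd ℂ) (opX1 (qfun ℒ₁) α β (-s) g (rep (lam - (s:ℝ) * α))) := by
          intro lam hlam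
          have hmu : lam - (s:ℝ) * α ∈ latF α β := hbij.1 hlam
          have hTl := hrep lam hlam
          have hTm := hrep _ hmu
          simp only [opX1]
          rw [hTl, hTm]
          have harg : lam - (s:ℝ) * α - ((-s : ℤ):ℝ) * (α / 2) = lam - (s:ℝ) * (α / 2) := by
            push_cast; ring
          rw [harg]
          have hscal : ((w lam : ℝ) : ℂ) * qfun ℒ₁ (lam - (s:ℝ) * (α / 2)) =
              ((w (lam - (s:ℝ) * α) : ℝ) : ℂ) * (starRingEnd ℂ) (qfun ℒ₁ (lam - (s:ℝ) * (α / 2))) := by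
            rw [conj_qfun]
            have hw' : ((w lam : ℝ) : ℂ) =
                (-1:ℂ) ^ (lfun ℒ₁ (lam - (s:ℝ) * (α / 2))) * ((w (lam - (s:ℝ) * α) : ℝ) : ℂ) := by
              rcases hs with rfl | rfl
              · have h := (hwrec (lam - ((1:ℤ):ℝ) * α) hmu).1
                have e1 : lam - ((1:ℤ):ℝ) * α + α = lam := by push_cast; ring
                have e2 : lam - ((1:ℤ):ℝ) * α + α / 2 = lam - ((1:ℤ):ℝ) * (α / 2) := by
                  push_cast; ring
                rw [e1, e2] at h
                rw [h]; push_cast; ring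
              · have h := (hwrec lam hlam).1
                have e1 : lam + α = lam - ((-1:ℤ):ℝ) * α := by push_cast; ring
                have e2 : lam + α / 2 = lam - ((-1:ℤ):ℝ) * (α / 2) := by push_cast; ring
                rw [e1, e2] at h
                rw [h]
                push_cast
                rw [← mul_assoc, ← mul_pow]
                norm_num
            rw [hw']; ring
          have hfun : f ((rep lam).1 - s, (rep lam).2) * (starRingEnd ℂ) (g (rep lam)) =
              f (rep (lam - (s:ℝ) * α)) * (starRingEnd ℂ)
                (g ((rep (lam - (s:ℝ) * α)).1 - -s, (rep (lam - (s:ℝ) * α)).2)) := by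
            apply pair_indep hmn hαβ hlin hξ hf.1 hg.1
            · show (((rep lam).1 - s : ℤ) : ℝ) * α + (((rep lam).2 : ℤ) : ℝ) * β =
                (((rep (lam - (s:ℝ) * α)).1 : ℤ) : ℝ) * α + (((rep (lam - (s:ℝ) * α)).2 : ℤ) : ℝ) * β
              push_cast
              linear_combination hTl - hTm
            · show (rep lam).1 - ((rep lam).1 - s) =
                ((rep (lam - (s:ℝ) * α)).1 - -s) - (rep (lam - (s:ℝ) * α)).1
              ring
            · show (rep lam).2 - (rep lam).2 =
                (rep (lam - (s:ℝ) * α)).2 - (rep (lam - (s:ℝ) * α)).2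
              ring
          rw [map_mul]
          linear_combination (f ((rep lam).1 - s, (rep lam).2) * (starRingEnd ℂ) (g (rep lam))) * hscal
            + (((w (lam - (s:ℝ) * α) : ℝ) : ℂ) * (starRingEnd ℂ) (qfun ℒ₁ (lam - (s:ℝ) * (α / 2)))) * hfun
        have hmain : (∑ᶠ lam ∈ latF α β,
            ((w lam : ℝ) : ℂ) * opX1 (qfun ℒ₁) α β s f (rep lam) * (starRingEnd ℂ) (g (rep lam))) =
            ∑ᶠ lam ∈ latF α β,
            ((w lam : ℝ) : ℂ) * f (rep lam) * (starRingEnd ℂ) (opX1 (qfun ℒ₁) α β (-s) g (rep lam)) :=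
          finsum_mem_eq_of_bijOn _ hbij hpt
        rw [hB, hB]
        exact hmain
      · -- X2
        have hbij : Set.BijOn (fun lam => lam - (s:ℝ) * β) (latF α β) (latF α β) := by
          refine ⟨?_, fun a _ b _ h => by simpa using h, ?_⟩
          · rintro lam ⟨x, y, rfl⟩
            exact ⟨x, y - s, by push_cast; ring⟩
          · rintro mu ⟨x, y, rfl⟩
            refine ⟨(x:ℝ) * α + ((y + s : ℤ):ℝ) * β, ⟨x, y + s, rfl⟩, ?_⟩
            push_cast; ring
        have hpt : ∀ lam ∈ latF α β,
            ((w lam : ℝ) : ℂ) * opX2 (qfun ℒ₂) α β s f (rep lam) * (starRingEnd ℂ) (g (rep lam)) =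
            ((w (lam - (s:ℝ) * β) : ℝ) : ℂ) * f (rep (lam - (s:ℝ) * β)) *
              (starRingEnd ℂ) (opX2 (qfun ℒ₂) α β (-s) g (rep (lam - (s:ℝ) * β))) := by
          intro lam hlam
          have hmu : lam - (s:ℝ) * β ∈ latF α β := hbij.1 hlam
          have hTl := hrep lam hlam
          have hTm := hrep _ hmu
          simp only [opX2]
          rw [hTl, hTm]
          have harg : lam - (s:ℝ) * β - ((-s : ℤ):ℝ) * (β / 2) = lam - (s:ℝ) * (β / 2) := by
            push_cast; ring
          rw [harg]
          have hscal : ((w lam : ℝ) : ℂ) * qfun ℒ₂ (lam - (s:ℝ) * (β / 2)) =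
              ((w (lam - (s:ℝ) * β) : ℝ) : ℂ) * (starRingEnd ℂ) (qfun ℒ₂ (lam - (s:ℝ) * (β / 2))) := by
            rw [conj_qfun]
            have hw' : ((w lam : ℝ) : ℂ) =
                (-1:ℂ) ^ (lfun ℒ₂ (lam - (s:ℝ) * (β / 2))) * ((w (lam - (s:ℝ) * β) : ℝ) : ℂ) := by
              rcases hs with rfl | rfl
              · have h := (hwrec (lam - ((1:ℤ):ℝ) * β) hmu).2
                have e1 : lam - ((1:ℤ):ℝ) * β + β = lam := by push_cast; ring
                have e2 : lam - ((1:ℤ):ℝ) * β + β / 2 = lam - ((1:ℤ):ℝ) * (β / 2) := by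
                  push_cast; ring
                rw [e1, e2] at h
                rw [h]; push_cast; ring
              · have h := (hwrec lam hlam).2
                have e1 : lam + β = lam - ((-1:ℤ):ℝ) * β := by push_cast; ring
                have e2 : lam + β / 2 = lam - ((-1:ℤ):ℝ) * (β / 2) := by push_cast; ring
                rw [e1, e2] at h
                rw [h]
                push_cast
                rw [← mul_assoc, ← mul_pow]
                norm_num
            rw [hw']; ring
          have hfun : f ((rep lam).1, (rep lam).2 - s) * (starRingEnd ℂ) (g (rep lam)) =
              f (rep (lam - (s:ℝ) * β)) * (starRingEnd ℂ)
                (g ((rep (lam - (s:ℝ) * β)).1, (rep (lam - (s:ℝ) * β)).2 - -s)) := by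
            apply pair_indep hmn hαβ hlin hξ hf.1 hg.1
            · show (((rep lam).1 : ℤ) : ℝ) * α + (((rep lam).2 - s : ℤ) : ℝ) * β =
                (((rep (lam - (s:ℝ) * β)).1 : ℤ) : ℝ) * α + (((rep (lam - (s:ℝ) * β)).2 : ℤ) : ℝ) * β
              push_cast
              linear_combination hTl - hTm
            · show (rep lam).1 - (rep lam).1 =
                (rep (lam - (s:ℝ) * β)).1 - (rep (lam - (s:ℝ) * β)).1
              ring
            · show (rep lam).2 - ((rep lam).2 - s) =
                ((rep (lam - (s:ℝ) * β)).2 - -s) - (rep (lam - (s:ℝ) * β)).2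
              ring
          rw [map_mul]
          linear_combination (f ((rep lam).1, (rep lam).2 - s) * (starRingEnd ℂ) (g (rep lam))) * hscal
            + (((w (lam - (s:ℝ) * β) : ℝ) : ℂ) * (starRingEnd ℂ) (qfun ℒ₂ (lam - (s:ℝ) * (β / 2)))) * hfun
        have hmain : (∑ᶠ lam ∈ latF α β,
            ((w lam : ℝ) : ℂ) * opX2 (qfun ℒ₂) α β s f (rep lam) * (starRingEnd ℂ) (g (rep lam))) =
            ∑ᶠ lam ∈ latF α β,
            ((w lam : ℝ) : ℂ) * f (rep lam) * (starRingEnd ℂ) (opX2 (qfun ℒ₂) α β (-s) g (rep lam)) :=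
          finsum_mem_eq_of_bijOn _ hbij hpt
        rw [hB, hB]
        exact hmain
    · -- H
      rw [hB, hB]
      apply finsum_mem_congr rfl
      intro lam hlam
      have hT := hrep lam hlam
      simp only [opH]
      rw [hT, map_mul, Complex.conj_ofReal]
      ring


end
end
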